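/- arXiv:1505.02500 — 6 statements merged into one kernel-verified Lean document; each statement's English description precedes it below -/
import Mathlib

section
/- Let k, m ∈ ℕ with 1 ≤ k < m. Then there is a finite colouring of ℝ such that there does not exist an uncountable set X ⊆ ℝ with FS_k(X) ∪ FS_m(X) monochromatic. -/
open Cardinal

/-- `FS k X` is the set of sums of `k` distinct elements of `X`. -/
def FS (k : ℕ) (X : Set ℝ) : Set ℝ :=
  {y | ∃ F : Finset ℝ, ↑F ⊆ X ∧ F.card = k ∧ y = ∑ x ∈ F, x}

noncomputable def col (L : ℝ) (y : ℝ) : Fin 3 :=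
  ⟨(⌊Real.log |y| / L⌋ % 3).toNat, by omega⟩

lemma col_eq {L y z : ℝ} (h : col L y = col L z) :
    ⌊Real.log |y| / L⌋ % 3 = ⌊Real.log |z| / L⌋ % 3 := by
  have := congrArg Fin.val h
  simp only [col] at this
  omega

lemma countable_small_points (X : Set ℝ) :
    (X ∩ {a : ℝ | ∃ δ > 0, (X ∩ Metric.ball a δ).Countable}).Countable := by
  have h : (X ∩ {a : ℝ | ∃ δ > 0, (X ∩ Metric.ball a δ).Countable}) ⊆
      ⋃ pq : ℚ × ℚ, ⋃ (_ : (X ∩ Set.Ioo (pq.1 : ℝ) (pq.2 : ℝ)).Countable),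
        X ∩ Set.Ioo (pq.1 : ℝ) (pq.2 : ℝ) := by
    rintro a ⟨haX, δ, hδ, hcnt⟩
    obtain ⟨p, hp1, hp2⟩ := exists_rat_btwn (show a - δ < a by linarith)
    obtain ⟨q, hq1, hq2⟩ := exists_rat_btwn (show a < a + δ by linarith)
    have hsub : Set.Ioo (p : ℝ) (q : ℝ) ⊆ Metric.ball a δ := by
      rw [Real.ball_eq_Ioo]
      exact Set.Ioo_subset_Ioo hp1.le hq2.le
    simp only [Set.mem_iUnion]
    exact ⟨(p, q), hcnt.mono (Set.inter_subset_inter_right _ hsub), haX, hp2, hq1⟩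
  exact Set.Countable.mono h
    (Set.countable_iUnion fun pq => Set.countable_iUnion fun h => h)

lemma sum_close {a δ : ℝ} {j : ℕ} {F : Finset ℝ} (hF : ↑F ⊆ Metric.ball a δ)
    (hcard : F.card = j) : |(∑ x ∈ F, x) - j * a| ≤ j * δ := by
  have h1 : (∑ x ∈ F, x) - j * a = ∑ x ∈ F, (x - a) := by
    rw [Finset.sum_sub_distrib, Finset.sum_const, hcard, nsmul_eq_mul]
  rw [h1]
  calc |∑ x ∈ F, (x - a)| ≤ ∑ x ∈ F, |x - a| := Finset.abs_sum_le_sum_abs _ _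
    _ ≤ ∑ _x ∈ F, δ := by
        refine Finset.sum_le_sum fun x hx => ?_
        have := hF hx
        rw [Metric.mem_ball, Real.dist_eq] at this
        exact this.le
    _ = j * δ := by rw [Finset.sum_const, hcard, nsmul_eq_mul]

lemma log_close {j : ℕ} {A d S : ℝ} (hA : 0 < A) (hj : 0 < (j:ℝ)) (hd0 : 0 < d)
    (hd2 : d ≤ 1/2) (hS1 : j * A * (1 - d) ≤ |S|) (hS2 : |S| ≤ j * A * (1 + d)) :
    |Real.log |S| - Real.log (j * A)| ≤ 2 * d := by
  have hjA : 0 < (j:ℝ) * A := by positivity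
  set r : ℝ := |S| / (j * A) with hrdef
  have hr1 : 1 - d ≤ r := (le_div_iff₀ hjA).mpr (by nlinarith)
  have hr2 : r ≤ 1 + d := (div_le_iff₀ hjA).mpr (by nlinarith)
  have hrpos : 0 < r := by linarith
  have hSpos : 0 < |S| := by nlinarith
  have hlog : Real.log |S| - Real.log (j * A) = Real.log r :=
    (Real.log_div hSpos.ne' hjA.ne').symm
  have h1 : Real.log r ≤ 2 * d :=
    le_trans (Real.log_le_sub_one_of_pos hrpos) (by linarith)
  have h2 : -(2 * d) ≤ Real.log r := by
    have hinv := Real.log_le_sub_one_of_pos (inv_pos.mpr hrpos)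
    rw [Real.log_inv] at hinv
    have hrinv : r⁻¹ ≤ 1 + 2 * d := by
      rw [inv_eq_one_div, div_le_iff₀ hrpos]
      nlinarith
    linarith
  rw [hlog]
  exact abs_le.mpr ⟨h2, h1⟩

set_option maxHeartbeats 1000000 in
theorem stmt_1 (k m : ℕ) (hk : 1 ≤ k) (hkm : k < m) :
    ∃ (n : ℕ) (c : ℝ → Fin n),
      ¬ ∃ X : Set ℝ, ℵ₁ ≤ #X ∧ ∃ i : Fin n, ∀ y ∈ FS k X ∪ FS m X, c y = i := by
  have hk0 : (0:ℝ) < k := by exact_mod_cast hk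
  have hm0 : (0:ℝ) < m := by exact_mod_cast hk.trans hkm.le
  set L : ℝ := Real.log ((m:ℝ) / k) with hLdef
  have hL : 0 < L := Real.log_pos ((one_lt_div hk0).mpr (by exact_mod_cast hkm))
  refine ⟨3, col L, ?_⟩
  rintro ⟨X, hX, i, hmono⟩
  -- X is not countable
  have hXc : ¬ X.Countable := by
    intro h
    exact absurd (hX.trans (Cardinal.mk_le_aleph0_iff.mpr h.to_subtype))
      (Cardinal.aleph0_lt_aleph_one.2)
  -- the countable bad set
  set D : Set ℝ := {(0:ℝ)} ∪ ⋃ n : ℤ, {a : ℝ | Real.log (k * |a|) = n * L} with hDdef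
  have hDc : D.Countable := by
    refine (Set.countable_singleton _).union (Set.countable_iUnion fun n => ?_)
    have hsub : {a : ℝ | Real.log (k * |a|) = n * L} ⊆
        {Real.exp (n * L) / k, -(Real.exp (n * L) / k), 0} := by
      intro a ha
      rcases eq_or_ne a 0 with rfl | ha0
      · right; right; rfl
      · have hpos : 0 < (k:ℝ) * |a| := by
          have := abs_pos.mpr ha0; positivity
        have : (k:ℝ) * |a| = Real.exp (n * L) := by
          rw [← ha, Real.exp_log hpos]
        have habs : |a| = Real.exp (n * L) / k := by
          field_simp at this ⊢; linarith
        rcases abs_cases a with ⟨h1, _⟩ | ⟨h1, _⟩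
        · left; show a = _; rw [← habs]; exact h1.symm
        · right; left; show a = -_; rw [← habs]; linarith
    exact Set.Countable.mono hsub (Set.toFinite _).countable
  -- find a good condensation point
  set T : Set ℝ := {a : ℝ | ∃ δ > 0, (X ∩ Metric.ball a δ).Countable} with hTdef
  have hnotsub : ¬ X ⊆ (X ∩ T) ∪ D := by
    intro h
    exact hXc (((countable_small_points X).union hDc).mono h)
  obtain ⟨a, haX, haTD⟩ := Set.not_subset.mp hnotsub
  have haT : a ∉ T := fun h => haTD (Or.inl ⟨haX, h⟩)
  have haD : a ∉ D := fun h => haTD (Or.inr h)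
  have ha0 : a ≠ 0 := fun h => haD (Or.inl h)
  have hnL : ∀ n : ℤ, Real.log (k * |a|) ≠ n * L := by
    intro n h
    exact haD (Or.inr (Set.mem_iUnion.mpr ⟨n, h⟩))
  have hball : ∀ δ > 0, ¬ (X ∩ Metric.ball a δ).Countable := by
    intro δ hδ h
    exact haT ⟨δ, hδ, h⟩
  set A : ℝ := |a| with hAdef
  have hA : 0 < A := abs_pos.mpr ha0
  set τ : ℝ := Real.log ((k:ℝ) * A) / L with hτdef
  have hτL : τ * L = Real.log ((k:ℝ) * A) := div_mul_cancel₀ _ hL.ne'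
  have hfr : 0 < Int.fract τ := by
    rcases (Int.fract_nonneg τ).lt_or_eq with h | h
    · exact h
    · exfalso
      have hfl : τ = (⌊τ⌋ : ℝ) := by
        have := Int.floor_add_fract τ
        rw [← h] at this; linarith
      exact hnL ⌊τ⌋ (by rw [← hτL, hfl]; norm_num)
  have hfr1 : Int.fract τ < 1 := Int.fract_lt_one τ
  set η₀ : ℝ := min (Int.fract τ) (1 - Int.fract τ) with hη₀def
  have hη₀ : 0 < η₀ := lt_min hfr (by linarith)
  have hη₀half : η₀ ≤ 1/2 := by
    rcases le_total (Int.fract τ) (1 - Int.fract τ) with h | h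
    · calc η₀ ≤ Int.fract τ := min_le_left _ _
        _ ≤ 1/2 := by linarith
    · calc η₀ ≤ 1 - Int.fract τ := min_le_right _ _
        _ ≤ 1/2 := by linarith
  have hsep : ∀ n : ℤ, η₀ ≤ |τ - n| := by
    intro n
    have hfloor := Int.floor_add_fract τ
    rcases le_or_gt n ⌊τ⌋ with h | h
    · have hc : (n:ℝ) ≤ (⌊τ⌋:ℝ) := by exact_mod_cast h
      have : η₀ ≤ τ - n := le_trans (min_le_left _ _) (by linarith)
      exact this.trans (le_abs_self _)
    · have hc : (⌊τ⌋:ℝ) + 1 ≤ (n:ℝ) := by exact_mod_cast h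
      have : η₀ ≤ n - τ := le_trans (min_le_right _ _) (by linarith)
      rw [abs_sub_comm]
      exact this.trans (le_abs_self _)
  -- choose the scale
  set d : ℝ := min (1/2 : ℝ) (L * η₀ / 4) with hddef
  have hd0 : 0 < d := lt_min (by norm_num) (by positivity)
  have hd2 : d ≤ 1/2 := min_le_left _ _
  have hd4 : d ≤ L * η₀ / 4 := min_le_right _ _
  set δ : ℝ := d * A with hδdef
  have hδ : 0 < δ := by positivity
  have hInf : (X ∩ Metric.ball a δ).Infinite := fun hfin => hball δ hδ hfin.countable
  obtain ⟨G, hGsub, hGcard⟩ := hInf.exists_subset_card_eq m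
  have hkG : k ≤ G.card := by rw [hGcard]; exact hkm.le
  obtain ⟨F, hFsub, hFcard⟩ := Finset.exists_subset_card_eq hkG
  have hGX : ↑G ⊆ X := hGsub.trans Set.inter_subset_left
  have hGb : ↑G ⊆ Metric.ball a δ := hGsub.trans Set.inter_subset_right
  have hFX : ↑F ⊆ X := (Finset.coe_subset.mpr hFsub).trans hGX
  have hFb : ↑F ⊆ Metric.ball a δ := (Finset.coe_subset.mpr hFsub).trans hGb
  set SF : ℝ := ∑ x ∈ F, x with hSF
  set SG : ℝ := ∑ x ∈ G, x with hSG
  -- bounds on |SF|, |SG|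
  have hbound : ∀ (j : ℕ) (H : Finset ℝ), ↑H ⊆ Metric.ball a δ → H.card = j →
      (j:ℝ) * A * (1 - d) ≤ |∑ x ∈ H, x| ∧ |∑ x ∈ H, x| ≤ (j:ℝ) * A * (1 + d) := by
    intro j H hHb hHcard
    have h1 : |(∑ x ∈ H, x) - j * a| ≤ j * δ := sum_close hHb hHcard
    have h2 : |(j:ℝ) * a| = j * A := by
      rw [abs_mul, Nat.abs_cast]
    have h3 : |(|∑ x ∈ H, x|) - (j:ℝ) * A| ≤ j * δ := by
      rw [← h2]
      exact (abs_abs_sub_abs_le_abs_sub _ _).trans h1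
    rw [abs_le] at h3
    constructor <;> [nlinarith [h3.1]; nlinarith [h3.2]]
  obtain ⟨hF1, hF2⟩ := hbound k F hFb hFcard
  obtain ⟨hG1, hG2⟩ := hbound m G hGb hGcard
  have hlogF : |Real.log |SF| - Real.log ((k:ℝ) * A)| ≤ 2 * d :=
    log_close hA hk0 hd0 hd2 hF1 hF2
  have hlogG : |Real.log |SG| - Real.log ((m:ℝ) * A)| ≤ 2 * d :=
    log_close hA hm0 hd0 hd2 hG1 hG2
  have hlogm : Real.log ((m:ℝ) * A) = Real.log ((k:ℝ) * A) + L := by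
    have hmk : (m:ℝ) * A = ((k:ℝ) * A) * ((m:ℝ) / k) := by field_simp
    rw [hmk, Real.log_mul (by positivity) (by positivity)]
  -- colour equality
  have hcF : col L SF = i :=
    hmono SF (Set.mem_union_left _ (show SF ∈ FS k X from ⟨F, hFX, hFcard, hSF⟩))
  have hcG : col L SG = i :=
    hmono SG (Set.mem_union_right _ (show SG ∈ FS m X from ⟨G, hGX, hGcard, hSG⟩))
  have hmod := col_eq (hcF.trans hcG.symm)
  -- numeric contradiction
  set s : ℝ := Real.log |SF| / L with hsdef
  set t : ℝ := Real.log |SG| / L with htdef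
  set η : ℝ := 2 * d / L with hηdef
  have hηle : η ≤ η₀ / 2 := by
    rw [hηdef, div_le_iff₀ hL]
    nlinarith
  have hη4 : η ≤ 1/4 := by linarith
  have hη0 : 0 < η := by positivity
  have hs : |s - τ| ≤ η := by
    have : s - τ = (Real.log |SF| - Real.log ((k:ℝ) * A)) / L := by
      rw [hsdef, hτdef, div_sub_div_same]
    rw [this, abs_div, abs_of_pos hL]
    exact (div_le_div_iff_of_pos_right hL).mpr hlogF
  have ht : |t - (τ + 1)| ≤ η := by
    have hτ1 : τ + 1 = Real.log ((m:ℝ) * A) / L := by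
      rw [hlogm, hτdef]; field_simp
    have : t - (τ + 1) = (Real.log |SG| - Real.log ((m:ℝ) * A)) / L := by
      rw [htdef, hτ1, div_sub_div_same]
    rw [this, abs_div, abs_of_pos hL]
    exact (div_le_div_iff_of_pos_right hL).mpr hlogG
  rw [abs_le] at hs ht
  have hn1 : (⌊s⌋ : ℝ) ≤ s := Int.floor_le s
  have hn1' : s < ⌊s⌋ + 1 := Int.lt_floor_add_one s
  have hn2 : (⌊t⌋ : ℝ) ≤ t := Int.floor_le t
  have hn2' : t < ⌊t⌋ + 1 := Int.lt_floor_add_one t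
  have h21 : ⌊s⌋ ≤ ⌊t⌋ := Int.le_floor.mpr (by push_cast; linarith)
  have h22 : ⌊t⌋ ≤ ⌊s⌋ + 2 := by
    have : ⌊t⌋ < ⌊s⌋ + 3 := Int.floor_lt.mpr (by push_cast; linarith)
    omega
  have heq : ⌊s⌋ = ⌊t⌋ := by omega
  have hfin : |τ - (⌊s⌋ : ℝ)| < η₀ := by
    rw [abs_lt]
    constructor
    · -- -η₀ < τ - ⌊s⌋ : from ⌊s⌋ ≤ s ≤ τ + η
      linarith
    · -- τ - ⌊s⌋ < η₀ : from t < ⌊t⌋+1 = ⌊s⌋+1 and τ+1-η ≤ t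
      have : (⌊t⌋ : ℝ) = (⌊s⌋ : ℝ) := by exact_mod_cast heq.symm
      linarith
  exact absurd (hsep ⌊s⌋) (not_le.mpr hfin)
end

section
/- Let k ∈ ℕ, k ≥ 2, and let p be a prime not dividing k. Let r = min{t ∈ ℕ : p^t > k} and U_p = {a ∈ ℤ : gcd(a,p) = 1}. Then there is a function ψ : U_p → {0,1,2} such that whenever a, y ∈ U_p and y ≡ k·a (mod p^r), we have ψ(a) ≠ ψ(y). -/
lemma exists_coloring {G : Type*} [Group G] [Fintype G] (g : G) (hg : g ≠ 1) :
    ∃ f : G → Fin 3, ∀ x : G, f x ≠ f (g * x) := by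
  classical
  set d := orderOf g with hd
  have hdpos : 0 < d := orderOf_pos g
  have hd2 : 2 ≤ d := by
    rcases Nat.lt_or_ge d 2 with h | h
    · interval_cases d
      exact absurd (orderOf_eq_one_iff.mp hd.symm) hg
    · exact h
  set R : Setoid G := MulAction.orbitRel (Subgroup.zpowers g) G with hR
  let rep : G → G := fun x => (Quotient.mk R x).out
  have hrep : ∀ x : G, ∃ n : ℕ, g ^ n * rep x = x := by
    intro x
    have h1 : Quotient.mk R (rep x) = Quotient.mk R x := Quotient.out_eq _
    have h2 : x ∈ MulAction.orbit (Subgroup.zpowers g) (rep x) :=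
      Quotient.exact h1.symm
    obtain ⟨h, hh⟩ := h2
    have hmem : (h : G) ∈ Submonoid.powers g := by
      rw [mem_powers_iff_mem_zpowers]; exact h.2
    obtain ⟨n, hn⟩ := hmem
    have hn' : g ^ n = (h : G) := hn
    refine ⟨n, ?_⟩
    rw [hn']
    exact hh
  have hrepg : ∀ x : G, rep (g * x) = rep x := by
    intro x
    have : Quotient.mk R (g * x) = Quotient.mk R x := by
      apply Quotient.sound
      exact ⟨⟨g, Subgroup.mem_zpowers g⟩, rfl⟩
    simp only [rep, this]
  let idx : G → ℕ := fun x => Nat.find (hrep x)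
  let i : G → ℕ := fun x => idx x % d
  have hkey : ∀ x : G, i (g * x) = (i x + 1) % d := by
    intro x
    have h1 : g ^ idx x * rep x = x := Nat.find_spec (hrep x)
    have h2 : g ^ idx (g * x) * rep (g * x) = g * x := Nat.find_spec (hrep (g * x))
    rw [hrepg] at h2
    have h3 : g ^ (idx x + 1) * rep x = g * x := by
      rw [pow_succ', mul_assoc, h1]
    have h4 : g ^ idx (g * x) = g ^ (idx x + 1) := mul_right_cancel (h2.trans h3.symm)
    have h5 : idx (g * x) % d = (idx x + 1) % d := pow_inj_mod.mp h4
    have h6 : (idx x + 1) % d = (idx x % d + 1) % d := by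
      conv_lhs => rw [Nat.add_mod, Nat.mod_eq_of_lt (show 1 < d by omega)]
    exact h5.trans h6
  refine ⟨fun x => if i x = d - 1 then 2 else if i x % 2 = 0 then 0 else 1, fun x => ?_⟩
  have hix : i x < d := Nat.mod_lt _ hdpos
  have hgi := hkey x
  simp only
  rcases eq_or_ne (i x) (d - 1) with h | h
  · have h0 : i (g * x) = 0 := by
      rw [hgi, h, Nat.sub_add_cancel (by omega), Nat.mod_self]
    rw [if_pos h, h0, if_neg (by omega : ¬ (0:ℕ) = d - 1)]
    decide
  · have hgx : i (g * x) = i x + 1 := by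
      rw [hgi, Nat.mod_eq_of_lt (by omega)]
    rw [if_neg h, hgx]
    by_cases h2 : i x + 1 = d - 1
    · rw [if_pos h2]
      split_ifs <;> decide
    · rw [if_neg h2]
      by_cases hp2 : i x % 2 = 0
      · rw [if_pos hp2, if_neg (by omega)]; decide
      · rw [if_neg hp2, if_pos (by omega)]; decide

theorem stmt_3 (k : ℕ) (hk : 2 ≤ k) (p : ℕ) (hp : p.Prime) (hpk : ¬ p ∣ k)
    (r : ℕ) (hr : k < p ^ r) (hrmin : ∀ t : ℕ, 1 ≤ t → t < r → p ^ t ≤ k) (hr1 : 1 ≤ r) :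
    ∃ ψ : ℤ → Fin 3, ∀ a y : ℤ, IsCoprime a (p : ℤ) → IsCoprime y (p : ℤ) →
      y ≡ (k : ℤ) * a [ZMOD (p ^ r)] → ψ a ≠ ψ y := by
  classical
  haveI : NeZero (p ^ r) := ⟨pow_ne_zero _ hp.pos.ne'⟩
  haveI : Fact (1 < p ^ r) := ⟨by omega⟩
  have hcop : Nat.Coprime k (p ^ r) :=
    Nat.Coprime.pow_right r (hp.coprime_iff_not_dvd.mpr hpk).symm
  set g : (ZMod (p ^ r))ˣ := ZMod.unitOfCoprime k hcop with hgdef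
  have hgne : g ≠ 1 := by
    intro h
    have h1 : ((k : ZMod (p ^ r))) = 1 := by
      rw [← ZMod.coe_unitOfCoprime k hcop, ← hgdef, h, Units.val_one]
    have h2 : (k : ZMod (p ^ r)).val = (1 : ZMod (p ^ r)).val := by rw [h1]
    rw [ZMod.val_natCast, ZMod.val_one, Nat.mod_eq_of_lt hr] at h2
    omega
  obtain ⟨f, hf⟩ := exists_coloring g hgne
  have toUnit : ∀ z : ℤ, IsCoprime z (p : ℤ) → IsUnit ((z : ZMod (p ^ r))) := by
    intro z hz
    obtain ⟨u, v, huv⟩ := hz.pow_right (n := r)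
    have hz0 : ((p : ZMod (p ^ r))) ^ r = 0 := by
      rw [← Nat.cast_pow, ZMod.natCast_self]
    have h1 : ((u : ZMod (p ^ r)) * (z : ZMod (p ^ r))
        + (v : ZMod (p ^ r)) * ((p : ZMod (p ^ r))) ^ r) = 1 := by
      have := congrArg (fun t : ℤ => ((t : ZMod (p ^ r)))) huv
      push_cast at this
      exact this
    rw [hz0, mul_zero, add_zero] at h1
    exact IsUnit.of_mul_eq_one _ (by rw [mul_comm]; exact h1)
  refine ⟨fun a => if h : IsUnit ((a : ZMod (p ^ r))) then f h.unit else 0, ?_⟩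
  intro a y ha hy hmod
  have haU : IsUnit ((a : ZMod (p ^ r))) := toUnit a ha
  have hyU : IsUnit ((y : ZMod (p ^ r))) := toUnit y hy
  have hEq : (y : ZMod (p ^ r)) = ((k * a : ℤ) : ZMod (p ^ r)) := by
    rw [ZMod.intCast_eq_intCast_iff]
    exact_mod_cast hmod
  have hEq' : (y : ZMod (p ^ r)) = (k : ZMod (p ^ r)) * (a : ZMod (p ^ r)) := by
    rw [hEq]; push_cast; ring
  have hunits : hyU.unit = g * haU.unit := by
    apply Units.ext
    rw [Units.val_mul, IsUnit.unit_spec, IsUnit.unit_spec, hEq', hgdef,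
      ZMod.coe_unitOfCoprime]
  simp only [dif_pos haU, dif_pos hyU, hunits]
  exact hf haU.unit
end

section
/- Let k ≥ 2 and m ≥ 1 be natural numbers and let G = ℚ^m (the direct sum of m copies of ℚ). Then there is a colouring of G with 72 colours such that for every u ∈ G and every infinite subset X of G, there exists x ∈ X with the property that u + x and k·x (the sum of k copies of x) receive different colours. -/
open Finset

namespace S4

variable {m : ℕ}

def supp (x : Fin m → ℚ) : Finset (Fin m) := Finset.univ.filter (fun i => x i ≠ 0)

lemma mem_supp {x : Fin m → ℚ} {i : Fin m} : i ∈ supp x ↔ x i ≠ 0 := by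
  simp [supp]

lemma supp_nonempty {x : Fin m → ℚ} (hx : x ≠ 0) : (supp x).Nonempty := by
  rcases Function.ne_iff.mp hx with ⟨i, hi⟩
  exact ⟨i, mem_supp.mpr hi⟩

noncomputable def V (p : ℕ) (x : Fin m → ℚ) : ℤ :=
  if h : (supp x).Nonempty then (supp x).inf' h (fun i => padicValRat p (x i)) else 0

lemma V_def {p : ℕ} {x : Fin m → ℚ} (hx : x ≠ 0) :
    V p x = (supp x).inf' (supp_nonempty hx) (fun i => padicValRat p (x i)) := by
  rw [V, dif_pos (supp_nonempty hx)]

lemma V_le {p : ℕ} {x : Fin m → ℚ} {i : Fin m} (hi : x i ≠ 0) :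
    V p x ≤ padicValRat p (x i) := by
  have hx : x ≠ 0 := fun h => hi (by simp [h])
  rw [V_def hx]
  exact Finset.inf'_le _ (mem_supp.mpr hi)

lemma exists_V {p : ℕ} {x : Fin m → ℚ} (hx : x ≠ 0) :
    ∃ i, x i ≠ 0 ∧ padicValRat p (x i) = V p x := by
  rw [V_def hx]
  obtain ⟨i, hi, hv⟩ := Finset.exists_mem_eq_inf' (supp_nonempty hx) (fun i => padicValRat p (x i))
  exact ⟨i, mem_supp.mp hi, hv.symm⟩

lemma le_V {p : ℕ} {x : Fin m → ℚ} (hx : x ≠ 0) {a : ℤ}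
    (h : ∀ i, x i ≠ 0 → a ≤ padicValRat p (x i)) : a ≤ V p x := by
  rw [V_def hx]
  exact Finset.le_inf' _ _ (fun i hi => h i (mem_supp.mp hi))

lemma V_neg {p : ℕ} (x : Fin m → ℚ) : V p (-x) = V p x := by
  have hs : supp (-x) = supp x := by
    ext i; simp [mem_supp]
  unfold V
  rw [hs]
  congr 1
  · ext h
    congr 1
    funext i
    simpa using padicValRat.neg (x i)

lemma V_smul {p : ℕ} (hp : p.Prime) {c : ℚ} (hc : c ≠ 0) {x : Fin m → ℚ} (hx : x ≠ 0) :
    V p (c • x) = padicValRat p c + V p x := by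
  haveI := Fact.mk hp
  have hcx : c • x ≠ 0 := smul_ne_zero hc hx
  apply le_antisymm
  · obtain ⟨i, hi, hv⟩ := exists_V (p := p) hx
    have h1 : (c • x) i ≠ 0 := by simp [hi, hc]
    calc V p (c • x) ≤ padicValRat p ((c • x) i) := V_le h1
      _ = padicValRat p c + padicValRat p (x i) := by
          simp only [Pi.smul_apply, smul_eq_mul]
          exact padicValRat.mul hc hi
      _ = padicValRat p c + V p x := by rw [hv]
  · apply le_V hcx
    intro i hi
    have hxi : x i ≠ 0 := by
      intro h; apply hi; simp [h]
    have : padicValRat p ((c • x) i) = padicValRat p c + padicValRat p (x i) := by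
      simp only [Pi.smul_apply, smul_eq_mul]
      exact padicValRat.mul hc hxi
    rw [this]
    exact add_le_add le_rfl (V_le hxi)

lemma V_add_ge {p : ℕ} (hp : p.Prime) {u x : Fin m → ℚ} (hu : u ≠ 0) (hx : x ≠ 0)
    (hux : u + x ≠ 0) : min (V p u) (V p x) ≤ V p (u + x) := by
  haveI := Fact.mk hp
  apply le_V hux
  intro i hi
  by_cases h1 : u i = 0
  · have : (u + x) i = x i := by simp [h1]
    rw [this] at hi ⊢
    exact le_trans (min_le_right _ _) (V_le hi)
  by_cases h2 : x i = 0
  · have : (u + x) i = u i := by simp [h2]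
    rw [this] at hi ⊢
    exact le_trans (min_le_left _ _) (V_le hi)
  · have : (u + x) i = u i + x i := rfl
    rw [this] at hi ⊢
    refine le_trans ?_ (padicValRat.min_le_padicValRat_add (p := p) hi)
    exact min_le_min (V_le h1) (V_le h2)

lemma V_add_eq {p : ℕ} (hp : p.Prime) {u x : Fin m → ℚ} (hu : u ≠ 0) (hx : x ≠ 0)
    (h : V p x < V p u) : V p (u + x) = V p x := by
  haveI := Fact.mk hp
  have hux : u + x ≠ 0 := by
    intro h0
    have : x = -u := by
      funext i
      have := congrFun h0 i
      simp only [Pi.add_apply, Pi.zero_apply] at this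
      simp [Pi.neg_apply]; linarith
    rw [this, V_neg] at h
    exact lt_irrefl _ h
  apply le_antisymm
  · obtain ⟨i, hi, hv⟩ := exists_V (p := p) hx
    by_cases h1 : u i = 0
    · have he : (u + x) i = x i := by simp [h1]
      have := V_le (p := p) (x := u + x) (i := i) (by rw [he]; exact hi)
      rw [he, hv] at this
      exact this
    · have hui : V p x < padicValRat p (u i) := lt_of_lt_of_le h (V_le h1)
      have hsum : u i + x i ≠ 0 := by
        intro h0
        have : u i = -(x i) := by linarith
        rw [this, padicValRat.neg, hv] at hui
        exact lt_irrefl _ hui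
      -- x i = (u+x) i - u i
      have key : padicValRat p (x i) ≥ min (padicValRat p ((u+x) i)) (padicValRat p (u i)) := by
        have : (u + x) i + (-(u i)) = x i := by simp [Pi.add_apply]
        have h2 := padicValRat.min_le_padicValRat_add (p := p) (q := (u+x) i) (r := -(u i))
          (by rw [this]; exact hi)
        rw [this, padicValRat.neg] at h2
        exact h2
      have hle : padicValRat p ((u+x) i) ≤ padicValRat p (x i) := by
        by_contra hgt
        push_neg at hgt
        have h3 : padicValRat p (x i) < min (padicValRat p ((u+x) i)) (padicValRat p (u i)) :=
          lt_min hgt (by rw [hv]; exact hui)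
        exact lt_irrefl _ (lt_of_lt_of_le h3 key)
      have hne : (u + x) i ≠ 0 := by
        intro h0
        have hpv : (u:Fin m → ℚ) i + x i = 0 := h0
        exact hsum hpv
      calc V p (u + x) ≤ padicValRat p ((u+x) i) := V_le hne
        _ ≤ padicValRat p (x i) := hle
        _ = V p x := hv
  · have := V_add_ge hp hu hx hux
    rw [min_eq_right (le_of_lt h)] at this
    exact this


lemma not_dvd_num {p : ℕ} (hp : p.Prime) {z : ℚ} (h : p ∣ z.den) : ¬ (p ∣ z.num.natAbs) :=
  fun hd => hp.one_lt.ne' (Nat.eq_one_of_dvd_coprimes z.reduced hd h)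

lemma val_of_dvd_den {p : ℕ} (hp : p.Prime) {z : ℚ} (h : p ∣ z.den) :
    padicValRat p z = -(padicValNat p z.den : ℤ) := by
  have h0 : padicValInt p z.num = 0 := padicValNat.eq_zero_of_not_dvd (not_dvd_num hp h)
  show (padicValInt p z.num : ℤ) - (padicValNat p z.den : ℤ) = _
  rw [h0]; ring

lemma val_nonneg_of_not_dvd_den {p : ℕ} {z : ℚ} (h : ¬ p ∣ z.den) : 0 ≤ padicValRat p z := by
  have h0 : padicValNat p z.den = 0 := padicValNat.eq_zero_of_not_dvd h
  show (0:ℤ) ≤ (padicValInt p z.num : ℤ) - (padicValNat p z.den : ℤ)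
  rw [h0]; omega

lemma one_le_valNat_den {p : ℕ} (hp : p.Prime) {z : ℚ} (h : p ∣ z.den) :
    1 ≤ padicValNat p z.den := by
  rw [← Nat.factorization_def _ hp]
  exact (Nat.Prime.pow_dvd_iff_le_factorization hp z.den_nz).mp (by simpa using h)

lemma dvd_den_iff_val_neg {p : ℕ} (hp : p.Prime) {z : ℚ} :
    p ∣ z.den ↔ padicValRat p z < 0 := by
  constructor
  · intro h
    rw [val_of_dvd_den hp h]
    have := one_le_valNat_den hp h
    omega
  · intro h
    by_contra hnd
    exact absurd (val_nonneg_of_not_dvd_den hnd) (by omega)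

lemma valNat_den_dvd_le {p : ℕ} (hp : p.Prime) {z : ℚ} {N : ℕ} (h : -(N:ℤ) ≤ padicValRat p z) :
    padicValNat p z.den ≤ N := by
  by_cases hd : p ∣ z.den
  · rw [val_of_dvd_den hp hd] at h
    omega
  · rw [padicValNat.eq_zero_of_not_dvd hd]
    omega

section L1

variable {α : Type*}

lemma iterate_mod (σ : α → α) (d : ℕ) (hd : 0 < d) (hper : ∀ x, σ^[d] x = x) (j : ℕ) (x : α) :
    σ^[j] x = σ^[j % d] x := by
  induction j using Nat.strong_induction_on with
  | _ j ih =>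
    by_cases h : j < d
    · rw [Nat.mod_eq_of_lt h]
    · push_neg at h
      have h1 : j = (j - d) + d := by omega
      have h2 : σ^[j] x = σ^[j - d] x := by
        conv_lhs => rw [h1]
        rw [Function.iterate_add_apply, hper]
      rw [h2, ih (j - d) (by omega)]
      conv_rhs => rw [h1]
      rw [Nat.add_mod_right]

lemma exists_colouring (σ : α → α) (d : ℕ) (hd : 2 ≤ d)
    (hper : ∀ x, σ^[d] x = x)
    (hfree : ∀ (x : α) (j : ℕ), 0 < j → j < d → σ^[j] x ≠ x) :
    ∃ c : α → Fin 3, ∀ x, c (σ x) ≠ c x := by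
  classical
  have hd0 : 0 < d := by omega
  let S : Setoid α := ⟨fun a b => ∃ j, σ^[j] a = b, by
    constructor
    · exact fun a => ⟨0, rfl⟩
    · rintro a b ⟨j, rfl⟩
      refine ⟨d - j % d, ?_⟩
      rw [iterate_mod σ d hd0 hper j a, ← Function.iterate_add_apply]
      have h2 : d - j % d + j % d = d := by
        have := Nat.mod_lt j hd0; omega
      rw [h2, hper]
    · rintro a b c ⟨j, rfl⟩ ⟨j', rfl⟩
      exact ⟨j' + j, Function.iterate_add_apply σ j' j a⟩⟩
  letI := S
  have hrel : ∀ a b : α, (⟦a⟧ : Quotient S) = ⟦b⟧ → ∃ j, σ^[j] a = b := by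
    intro a b h
    exact Quotient.exact h
  let rep : α → α := fun x => (⟦x⟧ : Quotient S).out
  have hrepmk : ∀ x, (⟦rep x⟧ : Quotient S) = ⟦x⟧ := fun x => Quotient.out_eq _
  have hex : ∀ x, ∃ j, j < d ∧ σ^[j] (rep x) = x := by
    intro x
    obtain ⟨j, hj⟩ := hrel (rep x) x (hrepmk x)
    exact ⟨j % d, Nat.mod_lt _ hd0, by rw [← iterate_mod σ d hd0 hper]; exact hj⟩
  have huniq : ∀ (r : α) (j₁ j₂ : ℕ), j₁ < d → j₂ < d →
      σ^[j₁] r = σ^[j₂] r → j₁ = j₂ := by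
    intro r j₁ j₂ h₁ h₂ he
    rcases Nat.lt_trichotomy j₁ j₂ with hlt | heq | hgt
    · exfalso
      have : σ^[j₂ - j₁] (σ^[j₁] r) = σ^[j₁] r := by
        rw [← Function.iterate_add_apply]
        have : j₂ - j₁ + j₁ = j₂ := by omega
        rw [this, ← he]
      exact hfree _ (j₂ - j₁) (by omega) (by omega) this
    · exact heq
    · exfalso
      have : σ^[j₁ - j₂] (σ^[j₂] r) = σ^[j₂] r := by
        rw [← Function.iterate_add_apply]
        have : j₁ - j₂ + j₂ = j₁ := by omega
        rw [this, he]
      exact hfree _ (j₁ - j₂) (by omega) (by omega) this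
  let idx : α → ℕ := fun x => Nat.find (hex x)
  have hidx_lt : ∀ x, idx x < d := fun x => (Nat.find_spec (hex x)).1
  have hidx_eq : ∀ x, σ^[idx x] (rep x) = x := fun x => (Nat.find_spec (hex x)).2
  have hrep_sigma : ∀ x, rep (σ x) = rep x := by
    intro x
    show (⟦σ x⟧ : Quotient S).out = (⟦x⟧ : Quotient S).out
    congr 1
    exact Quotient.sound (Setoid.symm ⟨1, by simp⟩)
  have hidx_sigma : ∀ x, idx (σ x) = if idx x + 1 = d then 0 else idx x + 1 := by
    intro x
    have h1 : σ^[idx x + 1] (rep x) = σ x := by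
      rw [Function.iterate_succ_apply', hidx_eq]
    by_cases hc : idx x + 1 = d
    · have h2 : σ x = rep x := by
        rw [← h1, hc, hper]
      rw [if_pos hc]
      apply huniq (rep (σ x)) _ 0 (hidx_lt _) hd0
      rw [hidx_eq]
      simp only [Function.iterate_zero_apply, hrep_sigma x]
      exact h2
    · rw [if_neg hc]
      apply huniq (rep (σ x)) _ _ (hidx_lt _) (by have := hidx_lt x; omega)
      rw [hidx_eq, hrep_sigma x, h1]
  let col : ℕ → Fin 3 := fun n => if n + 1 = d then ⟨2, by omega⟩ else ⟨n % 2, by omega⟩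
  refine ⟨fun y => col (idx y), ?_⟩
  intro x
  show col (idx (σ x)) ≠ col (idx x)
  rw [hidx_sigma x]
  by_cases hc : idx x + 1 = d
  · rw [if_pos hc]
    have h2 : col 0 = ⟨0, by omega⟩ := by
      show (if (0:ℕ) + 1 = d then _ else _) = _
      rw [if_neg (by omega)]
    have h3 : col (idx x) = ⟨2, by omega⟩ := by
      show (if idx x + 1 = d then _ else _) = _
      rw [if_pos hc]
    rw [h2, h3]
    intro h
    have := congrArg Fin.val h
    simp at this
  · rw [if_neg hc]
    by_cases hc2 : idx x + 1 + 1 = d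
    · have h2 : col (idx x + 1) = ⟨2, by omega⟩ := by
        show (if idx x + 1 + 1 = d then _ else _) = _
        rw [if_pos hc2]
      have h3 : col (idx x) = ⟨idx x % 2, by omega⟩ := by
        show (if idx x + 1 = d then _ else _) = _
        rw [if_neg hc]
      rw [h2, h3]
      intro h
      have := congrArg Fin.val h
      simp at this
      omega
    · have h2 : col (idx x + 1) = ⟨(idx x + 1) % 2, by omega⟩ := by
        show (if idx x + 1 + 1 = d then _ else _) = _
        rw [if_neg hc2]
      have h3 : col (idx x) = ⟨idx x % 2, by omega⟩ := by
        show (if idx x + 1 = d then _ else _) = _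
        rw [if_neg hc]
      rw [h2, h3]
      intro h
      have := congrArg Fin.val h
      simp at this
      omega

end L1

section C3

variable {m : ℕ}

/-- the precision exponent -/
def tExp (k p : ℕ) : ℕ := (k-1).factorization p + 1

lemma val_k_zero {p k : ℕ} (hpk : ¬ p ∣ k) : padicValRat p (k : ℚ) = 0 := by
  rw [show ((k:ℚ)) = ((k:ℕ):ℚ) by norm_cast, padicValRat.of_nat,
    padicValNat.eq_zero_of_not_dvd hpk]
  rfl

lemma cast_pow_sub_one (k d : ℕ) (hk : 1 ≤ k) :
    ((k^d - 1 : ℕ) : ℚ) = (k:ℚ)^d - 1 := by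
  have : 1 ≤ k^d := Nat.one_le_pow _ _ (by omega)
  push_cast [Nat.cast_sub this]
  ring

lemma C3spec {k p : ℕ} (hk : 2 ≤ k) (hp : p.Prime) (hpk : ¬ p ∣ k) :
    ∃ c : (Fin m → ℚ) → Fin 3,
      (∀ x : Fin m → ℚ, x ≠ 0 → c ((k:ℚ) • x) ≠ c x) ∧
      (∀ u x : Fin m → ℚ, u ≠ 0 → x ≠ 0 →
        V p x + (tExp k p : ℤ) ≤ V p u → c (u + x) = c x) := by
  classical
  haveI hfp : Fact p.Prime := Fact.mk hp
  set t : ℕ := tExp k p with ht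
  have htdef : t = (k-1).factorization p + 1 := rfl
  have ht1 : 1 ≤ t := by omega
  have hk1 : k - 1 ≠ 0 := by omega
  have hco : (k).Coprime (p^t) :=
    Nat.Coprime.pow_right t (Nat.Coprime.symm ((Nat.Prime.coprime_iff_not_dvd hp).mpr hpk))
  haveI : NeZero (p^t) := ⟨pow_ne_zero t hp.ne_zero⟩
  set u0 : (ZMod (p^t))ˣ := ZMod.unitOfCoprime k hco with hu0
  set d : ℕ := orderOf u0 with hdd
  have hd_dvd : ∀ j : ℕ, d ∣ j ↔ p^t ∣ k^j - 1 := by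
    intro j
    rw [orderOf_dvd_iff_pow_eq_one]
    constructor
    · intro h
      have h2 : ((k:ZMod (p^t)))^j = 1 := by
        have := congrArg (Units.val) h
        rw [Units.val_pow_eq_pow_val] at this
        simpa [hu0, ZMod.coe_unitOfCoprime] using this
      have h3 : ((k^j : ℕ) : ZMod (p^t)) = ((1:ℕ) : ZMod (p^t)) := by
        push_cast
        simpa using h2
      have h4 := (ZMod.natCast_eq_natCast_iff _ _ _).mp h3
      exact (Nat.modEq_iff_dvd' (Nat.one_le_pow _ _ (by omega))).mp h4.symm
    · intro h
      have h4 : (1:ℕ) ≡ k^j [MOD p^t] := (Nat.modEq_iff_dvd' (Nat.one_le_pow _ _ (by omega))).mpr h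
      have h3 : ((k^j : ℕ) : ZMod (p^t)) = ((1:ℕ) : ZMod (p^t)) :=
        (ZMod.natCast_eq_natCast_iff _ _ _).mpr h4.symm
      apply Units.ext
      rw [Units.val_pow_eq_pow_val]
      have : ((k : ZMod (p^t)))^j = 1 := by
        push_cast at h3
        simpa using h3
      simpa [hu0, ZMod.coe_unitOfCoprime] using this
  have hd0 : 0 < d := orderOf_pos u0
  have hd2 : 2 ≤ d := by
    rcases Nat.lt_or_ge d 2 with h | h
    · exfalso
      have hd1 : d = 1 := by omega
      have := (hd_dvd 1).mp (by rw [hd1])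
      rw [pow_one] at this
      have := (Nat.Prime.pow_dvd_iff_le_factorization hp hk1).mp this
      omega
    · exact h
  -- the setoid on nonzero vectors
  have relVeq : ∀ a b : Fin m → ℚ, a ≠ 0 → b ≠ 0 → a - b ≠ 0 →
      V p b + (t:ℤ) ≤ V p (a - b) → V p a = V p b := by
    intro a b ha hb hab hV
    have h1 : V p b < V p (a - b) := by omega
    have := V_add_eq hp hab hb h1
    rw [sub_add_cancel] at this
    exact this
  let S : Setoid {y : Fin m → ℚ // y ≠ 0} := ⟨fun a b =>
      a.1 - b.1 = 0 ∨ (a.1 - b.1 ≠ 0 ∧ V p b.1 + (t:ℤ) ≤ V p (a.1 - b.1)), by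
    constructor
    · intro a; left; simp
    · rintro a b (h | ⟨h1, h2⟩)
      · left; rw [sub_eq_zero] at h ⊢; exact h.symm
      · right
        have hVab : V p a.1 = V p b.1 := relVeq a.1 b.1 a.2 b.2 h1 h2
        have hx : V p (b.1 - a.1) = V p (a.1 - b.1) := by
          rw [show b.1 - a.1 = -(a.1 - b.1) by ring, V_neg]
        constructor
        · intro h0
          apply h1
          have he : a.1 - b.1 = -(b.1 - a.1) := by ring
          rw [he, h0, neg_zero]
        · rw [hVab, hx]
          exact h2
    · rintro a b c (h | ⟨h1, h2⟩) hbc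
      · rw [sub_eq_zero] at h
        have : a = b := Subtype.ext h
        rw [this]
        exact hbc
      · rcases hbc with h' | ⟨h3, h4⟩
        · rw [sub_eq_zero] at h'
          have : b = c := Subtype.ext h'
          rw [← this]
          right; exact ⟨h1, h2⟩
        · have hVbc : V p b.1 = V p c.1 := relVeq b.1 c.1 b.2 c.2 h3 h4
          by_cases hac : a.1 - c.1 = 0
          · left; exact hac
          · right
            refine ⟨hac, ?_⟩
            have hdecomp : a.1 - c.1 = (a.1 - b.1) + (b.1 - c.1) := by ring
            have := V_add_ge hp h1 h3 (by rw [← hdecomp]; exact hac)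
            rw [← hdecomp] at this
            have hmin : min (V p (a.1 - b.1)) (V p (b.1 - c.1)) ≥ V p c.1 + t := by
              rw [ge_iff_le, le_min_iff]
              exact ⟨by omega, by omega⟩
            omega⟩
  letI := S
  have hkQ : ((k:ℚ)) ≠ 0 := by positivity
  let σ : {y : Fin m → ℚ // y ≠ 0} → {y : Fin m → ℚ // y ≠ 0} :=
    fun a => ⟨(k:ℚ) • a.1, smul_ne_zero hkQ a.2⟩
  have hresp : ∀ a b, S.r a b → S.r (σ a) (σ b) := by
    rintro a b (h | ⟨h1, h2⟩)
    · left
      show (k:ℚ) • a.1 - (k:ℚ) • b.1 = 0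
      rw [← smul_sub, h, smul_zero]
    · right
      have hd : (k:ℚ) • a.1 - (k:ℚ) • b.1 = (k:ℚ) • (a.1 - b.1) := by rw [smul_sub]
      constructor
      · rw [hd]; exact smul_ne_zero hkQ h1
      · show V p ((σ b).1) + (t:ℤ) ≤ _
        have e1 : V p ((σ b).1) = V p b.1 := by
          show V p ((k:ℚ) • b.1) = _
          rw [V_smul hp hkQ b.2, val_k_zero hpk, zero_add]
        have e2 : V p ((σ a).1 - (σ b).1) = V p (a.1 - b.1) := by
          show V p ((k:ℚ) • a.1 - (k:ℚ) • b.1) = _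
          rw [hd, V_smul hp hkQ h1, val_k_zero hpk, zero_add]
        rw [e1, e2]
        exact h2
  let σq : Quotient S → Quotient S := Quotient.map σ hresp
  have hmapmk : ∀ a, σq (⟦a⟧) = ⟦σ a⟧ := fun a => rfl
  have hiter : ∀ (j : ℕ) (a : {y : Fin m → ℚ // y ≠ 0}),
      σq^[j] ⟦a⟧ = ⟦⟨((k:ℚ))^j • a.1, smul_ne_zero (by positivity) a.2⟩⟧ := by
    intro j
    induction j with
    | zero => intro a; simp
    | succ n ih =>
      intro a
      rw [Function.iterate_succ_apply', ih a, hmapmk]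
      apply Quotient.sound
      left
      show (k:ℚ) • ((k:ℚ))^n • a.1 - ((k:ℚ))^(n+1) • a.1 = 0
      rw [smul_smul, ← pow_succ']
      simp
  -- scalar lemma: for j with p^t ∣ k^j - 1
  have hscal : ∀ (j : ℕ) (a : {y : Fin m → ℚ // y ≠ 0}), 0 < j →
      (S.r ⟨((k:ℚ))^j • a.1, smul_ne_zero (by positivity) a.2⟩ a ↔ p^t ∣ k^j - 1) := by
    intro j a hj
    have hc1 : ((k:ℚ))^j - 1 ≠ 0 := by
      have : (1:ℚ) < (k:ℚ)^j := by
        have : (2:ℚ) ≤ (k:ℚ) := by exact_mod_cast hk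
        calc (1:ℚ) < 2 := by norm_num
          _ ≤ (k:ℚ)^j := by
            calc (2:ℚ) ≤ (k:ℚ) := this
              _ = (k:ℚ)^1 := (pow_one _).symm
              _ ≤ (k:ℚ)^j := by
                apply pow_le_pow_right₀ (by linarith) (by omega)
      linarith
    have hdiff : ((k:ℚ))^j • a.1 - a.1 = (((k:ℚ))^j - 1) • a.1 := by
      rw [sub_smul, one_smul]
    have hdne : (((k:ℚ))^j - 1) • a.1 ≠ 0 := smul_ne_zero hc1 a.2
    have hVd : V p (((k:ℚ))^j • a.1 - a.1) = padicValRat p (((k:ℚ))^j - 1) + V p a.1 := by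
      rw [hdiff, V_smul hp hc1 a.2]
    have hcast : ((k:ℚ))^j - 1 = ((k^j - 1 : ℕ) : ℚ) := (cast_pow_sub_one k j (by omega)).symm
    have hvalnat : padicValRat p (((k:ℚ))^j - 1) = (padicValNat p (k^j - 1) : ℤ) := by
      rw [hcast]
      exact padicValRat.of_nat
    constructor
    · rintro (h | ⟨h1, h2⟩)
      · exfalso
        rw [hdiff] at h
        exact hdne h
      · rw [hVd, hvalnat] at h2
        have : (t:ℤ) ≤ (padicValNat p (k^j - 1) : ℤ) := by omega
        have h3 : t ≤ padicValNat p (k^j - 1) := by exact_mod_cast this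
        rw [← Nat.factorization_def _ hp] at h3
        refine (Nat.Prime.pow_dvd_iff_le_factorization hp ?_).mpr h3
        have : 2 ≤ k^j := by
          calc 2 = 2^1 := by norm_num
            _ ≤ k^j := Nat.pow_le_pow_left hk j |>.trans' (by
                have := Nat.pow_le_pow_right (by omega : 1 ≤ 2) (by omega : 1 ≤ j)
                simpa using this)
        omega
    · intro h
      right
      constructor
      · rw [hdiff]; exact hdne
      · rw [hVd, hvalnat]
        have h3 : t ≤ padicValNat p (k^j - 1) := by
          rw [← Nat.factorization_def _ hp]
          refine (Nat.Prime.pow_dvd_iff_le_factorization hp ?_).mp h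
          have h4 : 2 ≤ k^j := by
            calc 2 = 2^1 := by norm_num
              _ ≤ 2^j := Nat.pow_le_pow_right (by omega) (by omega)
              _ ≤ k^j := Nat.pow_le_pow_left hk j
          omega
        omega
  obtain ⟨c0, hc0⟩ := exists_colouring σq d hd2
    (by
      intro q
      induction q using Quotient.ind with
      | _ a =>
        rw [hiter d a]
        apply Quotient.sound
        exact (hscal d a hd0).mpr ((hd_dvd d).mp dvd_rfl))
    (by
      intro q j hj1 hj2 habs
      induction q using Quotient.ind with
      | _ a =>
        rw [hiter j a] at habs
        have := Quotient.exact habs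
        have hdvd := (hscal j a hj1).mp this
        have := (hd_dvd j).mpr hdvd
        have := Nat.le_of_dvd hj1 this
        omega)
  refine ⟨fun x => if h : x = 0 then 0 else c0 ⟦⟨x, h⟩⟧, ?_, ?_⟩
  · intro x hx
    have hkx : (k:ℚ) • x ≠ 0 := smul_ne_zero hkQ hx
    simp only [dif_neg hx, dif_neg hkx]
    have : (⟦⟨(k:ℚ) • x, hkx⟩⟧ : Quotient S) = σq (⟦⟨x, hx⟩⟧) := rfl
    rw [this]
    exact hc0 _
  · intro u x hu hx hV
    have hux : u + x ≠ 0 := by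
      intro h0
      have : u = -x := by
        funext i
        have := congrFun h0 i
        simp only [Pi.add_apply, Pi.zero_apply] at this
        simp [Pi.neg_apply]; linarith
      rw [this, V_neg] at hV
      omega
    simp only [dif_neg hux, dif_neg hx]
    congr 1
    apply Quotient.sound
    right
    constructor
    · show u + x - x ≠ 0
      simpa using hu
    · show V p x + (t:ℤ) ≤ V p (u + x - x)
      simpa using hV

end C3


section Defs

variable {m : ℕ}

noncomputable def C3 (m k p : ℕ) : (Fin m → ℚ) → Fin 3 :=
  if h : 2 ≤ k ∧ p.Prime ∧ ¬ p ∣ k then (C3spec (m := m) h.1 h.2.1 h.2.2).choose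
  else fun _ => 0

lemma C3_smul {k p : ℕ} (hk : 2 ≤ k) (hp : p.Prime) (hpk : ¬ p ∣ k)
    (x : Fin m → ℚ) (hx : x ≠ 0) : C3 m k p ((k:ℚ) • x) ≠ C3 m k p x := by
  have h : C3 m k p = (C3spec (m := m) hk hp hpk).choose := by
    rw [C3, dif_pos ⟨hk, hp, hpk⟩]
  rw [h]
  exact (C3spec hk hp hpk).choose_spec.1 x hx

lemma C3_add {k p : ℕ} (hk : 2 ≤ k) (hp : p.Prime) (hpk : ¬ p ∣ k)
    {u x : Fin m → ℚ} (hu : u ≠ 0) (hx : x ≠ 0)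
    (h : V p x + (tExp k p : ℤ) ≤ V p u) : C3 m k p (u + x) = C3 m k p x := by
  have h2 : C3 m k p = (C3spec (m := m) hk hp hpk).choose := by
    rw [C3, dif_pos ⟨hk, hp, hpk⟩]
  rw [h2]
  exact (C3spec hk hp hpk).choose_spec.2 u x hu hx h

def AbsSum (x : Fin m → ℚ) : ℚ := ∑ i, |x i|

noncomputable def comp2 (k : ℕ) (x : Fin m → ℚ) : Bool × Bool :=
  if x = 0 then (false, false) else
    (decide (⌊Real.logb k ((AbsSum x : ℚ) : ℝ)⌋ % 2 = 0),
     decide (⌊Real.logb k ((AbsSum x : ℚ) : ℝ) + 1/2⌋ % 2 = 0))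

def DenSet (k : ℕ) (x : Fin m → ℚ) : Finset ℕ :=
  (∏ i, (x i).den).primeFactors \ k.primeFactors

noncomputable def eN (p : ℕ) (x : Fin m → ℚ) : ℕ := (-(V p x)).toNat

noncomputable def Mden (k : ℕ) (x : Fin m → ℚ) : ℕ :=
  (DenSet k x).sup (fun p => p ^ eN p x)

noncomputable def pstar (k : ℕ) (x : Fin m → ℚ) : ℕ := (Mden k x).minFac

noncomputable def comp3 (k : ℕ) (x : Fin m → ℚ) : Fin 3 :=
  if 2 ≤ Mden k x then C3 m k (pstar k x) x else 0

noncomputable def mu (k : ℕ) (x : Fin m → ℚ) : ℚ :=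
  if h : k.primeFactors.Nonempty then
    (k.primeFactors).inf' h (fun p => (V p x : ℚ) / (k.factorization p : ℚ))
  else 0

noncomputable def comp4 (k : ℕ) (x : Fin m → ℚ) : Bool :=
  if x = 0 then false else decide (⌊mu k x⌋ % 2 = 0)

def Du (u : Fin m → ℚ) : ℕ := ∏ i, (u i).den

def T3 (k : ℕ) (u : Fin m → ℚ) : ℕ := (Du u * k)^2 + Du u + k + 2

noncomputable def N4 (k : ℕ) (u : Fin m → ℚ) : ℕ :=
  1 + (k.primeFactors).sup (fun p => (-(V p u)).toNat)

end Defs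

section Comp4

variable {m : ℕ}

lemma inf'_add_const {s : Finset ℕ} (h : s.Nonempty) (f : ℕ → ℚ) (c : ℚ) :
    s.inf' h (fun p => f p + c) = s.inf' h f + c := by
  apply le_antisymm
  · obtain ⟨p, hp, he⟩ := Finset.exists_mem_eq_inf' h f
    calc s.inf' h (fun p => f p + c) ≤ f p + c := Finset.inf'_le _ hp
      _ = s.inf' h f + c := by rw [← he]
  · apply Finset.le_inf' h
    intro p hp
    have := Finset.inf'_le f hp
    linarith

lemma primeFactors_nonempty {k : ℕ} (hk : 2 ≤ k) : k.primeFactors.Nonempty :=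
  Nat.nonempty_primeFactors.mpr (by omega)

lemma mu_def {k : ℕ} (hk : 2 ≤ k) (x : Fin m → ℚ) :
    mu k x = (k.primeFactors).inf' (primeFactors_nonempty hk)
      (fun p => (V p x : ℚ) / (k.factorization p : ℚ)) := by
  rw [mu, dif_pos (primeFactors_nonempty hk)]

lemma V_k_smul {k p : ℕ} (hk : 2 ≤ k) (hp : p.Prime) {x : Fin m → ℚ} (hx : x ≠ 0) :
    V p ((k:ℚ) • x) = V p x + (k.factorization p : ℤ) := by
  have hkQ : ((k:ℚ)) ≠ 0 := by positivity
  rw [V_smul hp hkQ hx]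
  rw [show ((k:ℚ)) = ((k:ℕ):ℚ) by norm_cast, padicValRat.of_nat, Nat.factorization_def _ hp]
  ring

lemma mu_smul {k : ℕ} (hk : 2 ≤ k) {x : Fin m → ℚ} (hx : x ≠ 0) :
    mu k ((k:ℚ) • x) = mu k x + 1 := by
  rw [mu_def hk, mu_def hk, ← inf'_add_const (primeFactors_nonempty hk)]
  apply Finset.inf'_congr _ rfl
  intro p hp
  obtain ⟨hpp, hpk, -⟩ := Nat.mem_primeFactors.mp hp
  have ha : 0 < k.factorization p := Nat.Prime.factorization_pos_of_dvd hpp (by omega) hpk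
  have haQ : ((k.factorization p : ℚ)) ≠ 0 := by positivity
  rw [V_k_smul hk hpp hx]
  push_cast
  field_simp

lemma V_u_lower {k p : ℕ} {u : Fin m → ℚ} (hp : p ∈ k.primeFactors) :
    -(((N4 k u) : ℤ) - 1) ≤ V p u := by
  have h1 : (-(V p u)).toNat ≤ (k.primeFactors).sup (fun q => (-(V q u)).toNat) :=
    Finset.le_sup (f := fun q => (-(V q u)).toNat) hp
  rw [N4]
  omega

lemma mu_add_eq {k : ℕ} (hk : 2 ≤ k) {u x : Fin m → ℚ} (hu : u ≠ 0) (hx : x ≠ 0)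
    (hux : u + x ≠ 0) (hmu : mu k x ≤ -((N4 k u : ℕ) : ℚ)) :
    mu k (u + x) = mu k x := by
  have hne := primeFactors_nonempty hk
  have hfact : ∀ p ∈ k.primeFactors, (0:ℚ) < (k.factorization p : ℚ) := by
    intro p hp
    obtain ⟨hpp, hpk, -⟩ := Nat.mem_primeFactors.mp hp
    have := Nat.Prime.factorization_pos_of_dvd hpp (by omega) hpk
    exact_mod_cast this
  have hN1 : 1 ≤ N4 k u := by rw [N4]; omega
  apply le_antisymm
  · -- find witness
    obtain ⟨p, hp, he⟩ := Finset.exists_mem_eq_inf' hne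
      (fun p => (V p x : ℚ) / (k.factorization p : ℚ))
    obtain ⟨hpp, hpk, -⟩ := Nat.mem_primeFactors.mp hp
    have ha := hfact p hp
    have hrho : (V p x : ℚ) / (k.factorization p : ℚ) = mu k x := by
      rw [mu_def hk]; exact he.symm
    -- V p x ≤ -(N4)
    have hVx : (V p x : ℚ) ≤ -((N4 k u : ℕ) : ℚ) := by
      have h1 : (V p x : ℚ) = (mu k x) * (k.factorization p : ℚ) := by
        rw [← hrho]; field_simp
      have h2 : (1:ℚ) ≤ (k.factorization p : ℚ) := by
        have := hfact p hp
        have : (1:ℕ) ≤ k.factorization p := by exact_mod_cast this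
        exact_mod_cast this
      calc (V p x : ℚ) = (mu k x) * (k.factorization p : ℚ) := h1
        _ ≤ (-((N4 k u : ℕ) : ℚ)) * (k.factorization p : ℚ) := by
            apply mul_le_mul_of_nonneg_right hmu (by linarith)
        _ ≤ -((N4 k u : ℕ) : ℚ) := by
            have hN : (0:ℚ) ≤ ((N4 k u : ℕ) : ℚ) := by positivity
            nlinarith
    have hVu := V_u_lower (u := u) hp
    have hVlt : V p x < V p u := by
      have h3 : (V p x : ℚ) < (V p u : ℚ) := by
        have h4 : (-(((N4 k u):ℤ) - 1) : ℚ) ≤ (V p u : ℚ) := by exact_mod_cast hVu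
        push_cast at h4 ⊢
        have hN : (1:ℚ) ≤ ((N4 k u : ℕ) : ℚ) := by exact_mod_cast hN1
        linarith
      exact_mod_cast h3
    have hVeq : V p (u + x) = V p x := V_add_eq hpp hu hx hVlt
    rw [mu_def hk]
    calc (k.primeFactors).inf' hne (fun q => (V q (u+x) : ℚ) / (k.factorization q : ℚ))
        ≤ (V p (u+x) : ℚ) / (k.factorization p : ℚ) := Finset.inf'_le _ hp
      _ = mu k x := by rw [hVeq, hrho]
  · conv_rhs => rw [mu_def hk]
    apply Finset.le_inf' hne
    intro p hp
    obtain ⟨hpp, hpk, -⟩ := Nat.mem_primeFactors.mp hp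
    have ha := hfact p hp
    have ha0 : 0 < k.factorization p := Nat.Prime.factorization_pos_of_dvd hpp (by omega) hpk
    have ha1 : (1:ℚ) ≤ (k.factorization p : ℚ) := by exact_mod_cast ha0
    by_cases hc : V p x < V p u
    · have hVeq : V p (u + x) = V p x := V_add_eq hpp hu hx hc
      rw [hVeq]
      rw [mu_def hk]
      exact Finset.inf'_le _ hp
    · push_neg at hc
      have hmin := V_add_ge hpp hu hx hux
      rw [min_eq_left hc] at hmin
      have hVu := V_u_lower (k := k) (u := u) hp
      have h1 : -(((N4 k u):ℤ) - 1) ≤ V p (u + x) := le_trans hVu hmin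
      have h2 : (-((((N4 k u):ℕ):ℚ) - 1)) ≤ ((V p (u+x) : ℤ) : ℚ) := by exact_mod_cast h1
      have hN : (1:ℚ) ≤ ((N4 k u : ℕ) : ℚ) := by exact_mod_cast hN1
      have hrho_ge : -(((N4 k u):ℚ)) < ((V p (u+x) : ℤ) : ℚ) / (k.factorization p : ℚ) := by
        rcases le_or_gt 0 (((V p (u+x) : ℤ)) : ℚ) with h | h
        · have h3 : (0:ℚ) ≤ ((V p (u+x) : ℤ) : ℚ) / (k.factorization p : ℚ) :=
            div_nonneg h (le_of_lt ha)
          linarith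
        · have hge : ((V p (u+x) : ℤ) : ℚ) ≤ ((V p (u+x) : ℤ) : ℚ) / (k.factorization p : ℚ) := by
            rw [le_div_iff₀ ha]
            nlinarith
          linarith
      linarith

end Comp4

section Comp4Good

variable {m : ℕ}

lemma parity_ne (n : ℤ) : (decide ((n+1) % 2 = 0)) ≠ (decide (n % 2 = 0)) := by
  by_cases h : n % 2 = 0
  · have h2 : (n+1) % 2 = 1 := by omega
    simp [h, h2]
  · have h2 : (n+1) % 2 = 0 := by omega
    simp [h, h2]

lemma comp4_good {k : ℕ} (hk : 2 ≤ k) {u x : Fin m → ℚ} (hu : u ≠ 0) (hx : x ≠ 0)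
    (hux : u + x ≠ 0) (hmu : mu k x ≤ -((N4 k u : ℕ) : ℚ)) :
    comp4 k (u + x) ≠ comp4 k ((k:ℚ) • x) := by
  have hkx : (k:ℚ) • x ≠ 0 := smul_ne_zero (by positivity) hx
  rw [comp4, if_neg hux, comp4, if_neg hkx, mu_smul hk hx, mu_add_eq hk hu hx hux hmu]
  have hfl : ⌊mu k x + 1⌋ = ⌊mu k x⌋ + 1 := Int.floor_add_one _
  rw [hfl]
  exact (parity_ne ⌊mu k x⌋).symm

lemma comp4_good0 {k : ℕ} (hk : 2 ≤ k) {x : Fin m → ℚ} (hx : x ≠ 0) :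
    comp4 k x ≠ comp4 k ((k:ℚ) • x) := by
  have hkx : (k:ℚ) • x ≠ 0 := smul_ne_zero (by positivity) hx
  rw [comp4, if_neg hx, comp4, if_neg hkx, mu_smul hk hx]
  have hfl : ⌊mu k x + 1⌋ = ⌊mu k x⌋ + 1 := Int.floor_add_one _
  rw [hfl]
  exact (parity_ne ⌊mu k x⌋).symm

end Comp4Good

section Comp2

variable {m : ℕ}

lemma AbsSum_nonneg (x : Fin m → ℚ) : 0 ≤ AbsSum x :=
  Finset.sum_nonneg (fun i _ => abs_nonneg _)

lemma AbsSum_pos {x : Fin m → ℚ} (hx : x ≠ 0) : 0 < AbsSum x := by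
  obtain ⟨i, hi⟩ := Function.ne_iff.mp hx
  exact Finset.sum_pos' (fun j _ => abs_nonneg _) ⟨i, Finset.mem_univ i, abs_pos.mpr hi⟩

lemma AbsSum_eq_zero {x : Fin m → ℚ} (hx : x = 0) : AbsSum x = 0 := by
  rw [hx, AbsSum]
  simp

lemma AbsSum_smul (c : ℚ) (hc : 0 ≤ c) (x : Fin m → ℚ) : AbsSum (c • x) = c * AbsSum x := by
  rw [AbsSum, AbsSum, Finset.mul_sum]
  apply Finset.sum_congr rfl
  intro i _
  rw [Pi.smul_apply, smul_eq_mul, abs_mul, abs_of_nonneg hc]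

lemma AbsSum_add_le (u x : Fin m → ℚ) : AbsSum (u + x) ≤ AbsSum u + AbsSum x := by
  rw [AbsSum, AbsSum, AbsSum, ← Finset.sum_add_distrib]
  apply Finset.sum_le_sum
  intro i _
  exact abs_add_le _ _

lemma AbsSum_lower (u x : Fin m → ℚ) : AbsSum x - AbsSum u ≤ AbsSum (u + x) := by
  have h := AbsSum_add_le (-u) (u + x)
  have h2 : (-u) + (u + x) = x := by ring
  rw [h2] at h
  have h3 : AbsSum (-u) = AbsSum u := by
    rw [AbsSum, AbsSum]
    apply Finset.sum_congr rfl
    intro i _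
    simp
  rw [h3] at h
  linarith

lemma floor_pair {s t : ℝ} (h : |t - s| < 1/4) :
    ⌊t⌋ % 2 ≠ ⌊s + 1⌋ % 2 ∨ ⌊t + 1/2⌋ % 2 ≠ ⌊s + 1 + 1/2⌋ % 2 := by
  set n := ⌊s⌋ with hn
  have h1 : (n:ℝ) ≤ s := Int.floor_le s
  have h2 : s < n + 1 := Int.lt_floor_add_one s
  have habs := abs_lt.mp h
  by_cases hA : 1/4 ≤ s - n ∧ s - n ≤ 3/4
  · left
    have ht : ⌊t⌋ = n := by
      rw [Int.floor_eq_iff]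
      constructor <;> [skip; skip] <;> push_cast <;> linarith [hA.1, hA.2]
    have hs1 : ⌊s + 1⌋ = n + 1 := by
      rw [Int.floor_add_one]
    rw [ht, hs1]
    omega
  · right
    rcases not_and_or.mp hA with hB | hC
    · push_neg at hB
      have ht : ⌊t + 1/2⌋ = n := by
        rw [Int.floor_eq_iff]
        constructor <;> push_cast <;> linarith
      have hs : ⌊s + 1 + 1/2⌋ = n + 1 := by
        rw [Int.floor_eq_iff]
        constructor <;> push_cast <;> linarith
      rw [ht, hs]
      omega
    · push_neg at hC
      have ht : ⌊t + 1/2⌋ = n + 1 := by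
        rw [Int.floor_eq_iff]
        constructor <;> push_cast <;> linarith
      have hs : ⌊s + 1 + 1/2⌋ = n + 2 := by
        rw [Int.floor_eq_iff]
        constructor <;> push_cast <;> linarith
      rw [ht, hs]
      omega

lemma logb_close {k : ℕ} (hk : 2 ≤ k) {a b : ℝ} (ha : 0 < a) (h1 : |b - a| * 8 < a) :
    |Real.logb k b - Real.logb k a| < 1/4 := by
  have h0 : |b - a| < a / 8 := by linarith [abs_nonneg (b - a)]
  have habs := abs_lt.mp h0
  have hb : 0 < b := by nlinarith [abs_nonneg (b - a)]
  have hba : b / a ≤ 9/8 := by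
    rw [div_le_iff₀ ha]
    nlinarith [abs_nonneg (b-a), le_abs_self (b-a)]
  have hab : a / b ≤ 8/7 := by
    rw [div_le_iff₀ hb]
    nlinarith [le_abs_self (a-b), abs_sub_comm a b]
  have l1 : Real.log b - Real.log a ≤ 1/7 := by
    have := Real.log_le_sub_one_of_pos (x := b / a) (by positivity)
    rw [Real.log_div (ne_of_gt hb) (ne_of_gt ha)] at this
    linarith
  have l2 : Real.log a - Real.log b ≤ 1/7 := by
    have := Real.log_le_sub_one_of_pos (x := a / b) (by positivity)
    rw [Real.log_div (ne_of_gt ha) (ne_of_gt hb)] at this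
    linarith
  have hk2 : (2:ℝ) ≤ (k:ℝ) := by exact_mod_cast hk
  have hlogk : Real.log 2 ≤ Real.log (k:ℝ) := Real.log_le_log (by norm_num) hk2
  have hlog2 : (0.6931471803 : ℝ) < Real.log 2 := Real.log_two_gt_d9
  have hlogkpos : 0 < Real.log (k:ℝ) := by linarith
  have key : |Real.log b - Real.log a| < Real.log (k:ℝ) / 4 := by
    rw [abs_lt]
    constructor <;> [linarith; linarith]
  rw [Real.logb, Real.logb, div_sub_div_same, abs_div, abs_of_pos hlogkpos]
  rw [div_lt_iff₀ hlogkpos]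
  linarith

lemma comp2_good {k : ℕ} (hk : 2 ≤ k) {u x : Fin m → ℚ} (hx : x ≠ 0)
    (hA : 8 * AbsSum u + 1 ≤ AbsSum x) :
    comp2 k (u + x) ≠ comp2 k ((k:ℚ) • x) := by
  have hAx : 0 < AbsSum x := AbsSum_pos hx
  have hAu : 0 ≤ AbsSum u := AbsSum_nonneg u
  have hlow := AbsSum_lower u x
  have hupp := AbsSum_add_le u x
  have hAux : 0 < AbsSum (u + x) := by linarith
  have hux : u + x ≠ 0 := by
    intro h0
    rw [AbsSum_eq_zero h0] at hAux
    exact lt_irrefl _ hAux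
  have hkx : (k:ℚ) • x ≠ 0 := smul_ne_zero (by positivity) hx
  -- real quantities
  set a : ℝ := ((AbsSum x : ℚ) : ℝ) with hadef
  set b : ℝ := ((AbsSum (u + x) : ℚ) : ℝ) with hbdef
  have haR : 0 < a := by rw [hadef]; exact_mod_cast hAx
  have h8 : |b - a| * 8 < a := by
    have h1 : |AbsSum (u + x) - AbsSum x| * 8 < AbsSum x := by
      have h1a : |AbsSum (u + x) - AbsSum x| < AbsSum x / 8 := by
        rw [abs_lt]
        constructor <;> linarith
      linarith
    have h2 : |b - a| = ((|AbsSum (u + x) - AbsSum x| : ℚ) : ℝ) := by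
      rw [hadef, hbdef, ← Rat.cast_sub, Rat.cast_abs]
    rw [h2, hadef]
    exact_mod_cast h1
  have hclose := logb_close hk haR h8
  -- logb of scaled
  have hsmul : Real.logb k ((AbsSum ((k:ℚ) • x) : ℚ) : ℝ) = Real.logb k a + 1 := by
    have h3 : AbsSum ((k:ℚ) • x) = (k:ℚ) * AbsSum x := AbsSum_smul _ (by positivity) x
    have hk1R : (1:ℝ) < (k:ℝ) := by
      have : (2:ℝ) ≤ (k:ℝ) := by exact_mod_cast hk
      linarith
    rw [h3]
    push_cast
    rw [Real.logb_mul (by positivity) (by exact_mod_cast ne_of_gt hAx)]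
    rw [Real.logb_self_eq_one hk1R]
    ring
  rw [comp2, if_neg hux, comp2, if_neg hkx, hsmul]
  set s : ℝ := Real.logb k a with hs
  set t : ℝ := Real.logb k b with htd
  have hdisj := floor_pair (s := s) (t := t) hclose
  have e1 : Real.logb k a + 1 = s + 1 := rfl
  intro hcontra
  have hfst := congrArg Prod.fst hcontra
  have hsnd := congrArg Prod.snd hcontra
  simp only at hfst hsnd
  rcases hdisj with hd | hd
  · exact hd (by
      have := decide_eq_decide.mp hfst
      omega)
  · exact hd (by
      have := decide_eq_decide.mp hsnd
      have e2 : s + 1 + 1/2 = (s + 1) + 1/2 := by ring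
      omega)

end Comp2


section Comp3

variable {m : ℕ}

lemma prodDen_ne_zero (x : Fin m → ℚ) : (∏ i, (x i).den) ≠ 0 := by
  apply Finset.prod_ne_zero_iff.mpr
  intro i _
  exact (x i).den_nz

lemma Du_ne_zero (u : Fin m → ℚ) : Du u ≠ 0 := prodDen_ne_zero u

lemma Du_pos (u : Fin m → ℚ) : 1 ≤ Du u := Nat.pos_of_ne_zero (Du_ne_zero u)

lemma DenSet_prime {k r : ℕ} (hk : 2 ≤ k) {x : Fin m → ℚ} (hr : r ∈ DenSet k x) :
    r.Prime ∧ ¬ r ∣ k := by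
  rw [DenSet, Finset.mem_sdiff] at hr
  obtain ⟨h1, h2⟩ := hr
  obtain ⟨hp, -, -⟩ := Nat.mem_primeFactors.mp h1
  refine ⟨hp, fun hdvd => h2 (Nat.mem_primeFactors.mpr ⟨hp, hdvd, by omega⟩)⟩

lemma DenSet_V_neg {k r : ℕ} {x : Fin m → ℚ} (hr : r ∈ DenSet k x) : V r x < 0 := by
  rw [DenSet, Finset.mem_sdiff] at hr
  obtain ⟨hp, hdvd, -⟩ := Nat.mem_primeFactors.mp hr.1
  obtain ⟨i, -, hi⟩ := (hp.prime.dvd_finset_prod_iff _).mp hdvd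
  have hvi : padicValRat r (x i) < 0 := (dvd_den_iff_val_neg hp).mp hi
  have hxi : x i ≠ 0 := by
    intro h0
    rw [h0] at hvi
    simp [padicValRat] at hvi
  exact lt_of_le_of_lt (V_le hxi) hvi

lemma DenSet_of {k r : ℕ} (hr : r.Prime) (hrk : ¬ r ∣ k) {x : Fin m → ℚ}
    (hV : V r x < 0) : r ∈ DenSet k x := by
  have hx : x ≠ 0 := by
    intro h0
    rw [h0] at hV
    have : supp (0 : Fin m → ℚ) = ∅ := by
      ext i; simp [mem_supp]
    rw [V, this] at hV
    simp at hV
  obtain ⟨i, hi, hvi⟩ := exists_V (p := r) hx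
  rw [DenSet, Finset.mem_sdiff]
  constructor
  · refine Nat.mem_primeFactors.mpr ⟨hr, ?_, prodDen_ne_zero x⟩
    refine dvd_trans ?_ (Finset.dvd_prod_of_mem (fun j => (x j).den) (Finset.mem_univ i))
    exact (dvd_den_iff_val_neg hr).mpr (by rw [hvi]; omega)
  · intro hmem
    exact hrk (Nat.mem_primeFactors.mp hmem).2.1

lemma eN_pos {k r : ℕ} {x : Fin m → ℚ} (hr : r ∈ DenSet k x) :
    1 ≤ eN r x ∧ V r x = -(eN r x : ℤ) := by
  have := DenSet_V_neg hr
  rw [eN]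
  omega

lemma V_nonneg_of_zero {r : ℕ} : V r (0 : Fin m → ℚ) = 0 := by
  have : supp (0 : Fin m → ℚ) = ∅ := by ext i; simp [mem_supp]
  rw [V, this]
  simp

lemma DenSet_smul {k : ℕ} (hk : 2 ≤ k) {x : Fin m → ℚ} (hx : x ≠ 0) :
    DenSet k ((k:ℚ) • x) = DenSet k x := by
  have hkx : (k:ℚ) • x ≠ 0 := smul_ne_zero (by positivity) hx
  ext r
  constructor
  · intro hr
    obtain ⟨hp, hpk⟩ := DenSet_prime hk hr
    have hV := DenSet_V_neg hr
    rw [V_smul hp (by positivity) hx, val_k_zero hpk, zero_add] at hV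
    exact DenSet_of hp hpk hV
  · intro hr
    obtain ⟨hp, hpk⟩ := DenSet_prime hk hr
    have hV := DenSet_V_neg hr
    apply DenSet_of hp hpk
    rw [V_smul hp (by positivity) hx, val_k_zero hpk, zero_add]
    exact hV

lemma Mden_smul {k : ℕ} (hk : 2 ≤ k) {x : Fin m → ℚ} (hx : x ≠ 0) :
    Mden k ((k:ℚ) • x) = Mden k x := by
  show (DenSet k ((k:ℚ) • x)).sup (fun p => p ^ eN p ((k:ℚ) • x))
      = (DenSet k x).sup (fun p => p ^ eN p x)
  rw [DenSet_smul hk hx]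
  apply Finset.sup_congr rfl
  intro r hr
  obtain ⟨hp, hpk⟩ := DenSet_prime hk hr
  have he : eN r ((k:ℚ) • x) = eN r x := by
    rw [eN, eN, V_smul hp (c := (k:ℚ)) (by positivity) hx, val_k_zero hpk, zero_add]
  rw [he]

lemma Mden_attained {k : ℕ} (hk : 2 ≤ k) {x : Fin m → ℚ} (hM : 2 ≤ Mden k x) :
    ∃ r ∈ DenSet k x, r ^ eN r x = Mden k x ∧ pstar k x = r := by
  have hne : (DenSet k x).Nonempty := by
    by_contra hempty
    rw [Finset.not_nonempty_iff_eq_empty] at hempty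
    rw [Mden, hempty] at hM
    simp at hM
  obtain ⟨r, hr, hsup⟩ := Finset.exists_mem_eq_sup (DenSet k x) hne (fun p => p ^ eN p x)
  have hsup' : Mden k x = r ^ eN r x := hsup
  refine ⟨r, hr, hsup'.symm, ?_⟩
  obtain ⟨hp, -⟩ := DenSet_prime hk hr
  obtain ⟨he1, -⟩ := eN_pos hr
  show (Mden k x).minFac = r
  rw [hsup']
  exact hp.pow_minFac (by omega)

lemma V_ge_neg_valDu {r : ℕ} (hr : r.Prime) {u : Fin m → ℚ} (hu : u ≠ 0) :
    -((Du u).factorization r : ℤ) ≤ V r u := by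
  apply le_V hu
  intro i hi
  have hden : (u i).den ∣ Du u := Finset.dvd_prod_of_mem _ (Finset.mem_univ i)
  have h2 := (Nat.factorization_le_iff_dvd (u i).den_nz (Du_ne_zero u)).mpr hden
  have h3 : (u i).den.factorization r ≤ (Du u).factorization r := Finsupp.le_def.mp h2 r
  rw [Nat.factorization_def _ hr] at h3
  have h4 : -(padicValNat r (u i).den : ℤ) ≤ padicValRat r (u i) := by
    show _ ≤ (padicValInt r (u i).num : ℤ) - (padicValNat r (u i).den : ℤ)
    omega
  omega

lemma g1 {k r : ℕ} (hk : 2 ≤ k) (hr : r.Prime) (hrk : ¬ r ∣ k) {u x : Fin m → ℚ}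
    (hu : u ≠ 0) (hVx : V r x < 0) (hM : T3 k u ≤ r ^ eN r x) :
    V r x + (tExp k r : ℤ) ≤ V r u := by
  set E := eN r x with hE
  have hE1 : 1 ≤ E := by rw [hE, eN]; omega
  have hVxE : V r x = -(E : ℤ) := by rw [hE, eN]; omega
  have hk1 : k - 1 ≠ 0 := by omega
  have hDu := Du_pos u
  have hr2 : 2 ≤ r := hr.two_le
  have hT3 : T3 k u = (Du u * k)^2 + Du u + k + 2 := rfl
  have hVDu := V_ge_neg_valDu hr hu
  by_cases hE2 : E = 1
  · -- r = M ≥ T3, so r > k-1 and r > Du u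
    rw [hE2, pow_one] at hM
    have hrk1 : ¬ r ∣ (k - 1) := by
      intro hdvd
      have := Nat.le_of_dvd (by omega) hdvd
      omega
    have ht : tExp k r = 1 := by
      rw [tExp, Nat.factorization_eq_zero_of_not_dvd hrk1]
    have hrDu : ¬ r ∣ Du u := by
      intro hdvd
      have := Nat.le_of_dvd (by omega) hdvd
      omega
    have hfz : (Du u).factorization r = 0 := Nat.factorization_eq_zero_of_not_dvd hrDu
    rw [hfz] at hVDu
    rw [hVxE, hE2, ht]
    omega
  · -- E ≥ 2
    have hE2' : 2 ≤ E := by omega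
    set M := r ^ E with hMdef
    have hr2M : r^2 ≤ M := by
      rw [hMdef]
      exact Nat.pow_le_pow_right (by omega) hE2'
    have hMT : (Du u * k)^2 ≤ M := by
      have : (Du u * k)^2 ≤ T3 k u := by rw [hT3]; omega
      omega
    have hstep : Du u * k * r ≤ M := by
      have hsq : (Du u * k * r)^2 ≤ M * M := by
        calc (Du u * k * r)^2 = (Du u * k)^2 * r^2 := by ring
          _ ≤ M * M := Nat.mul_le_mul hMT hr2M
      have : (Du u * k * r)^2 ≤ M^2 := by
        calc (Du u * k * r)^2 ≤ M * M := hsq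
          _ = M^2 := (sq M).symm
      exact (Nat.pow_le_pow_iff_left (by omega)).mp this
    set t := tExp k r with htdef
    have htE : t = (k-1).factorization r + 1 := rfl
    have hordp : r ^ ((k-1).factorization r) ∣ (k - 1) := Nat.ordProj_dvd _ _
    have hordple : r ^ ((k-1).factorization r) ≤ k - 1 := Nat.le_of_dvd (by omega) hordp
    have hrt : r ^ t ≤ r * k := by
      rw [htE, pow_succ, mul_comm (r ^ (k-1).factorization r) r]
      have : r ^ (k-1).factorization r ≤ k := by omega
      exact Nat.mul_le_mul_left r this
    have hDurt : Du u * r^t ≤ M := by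
      calc Du u * r^t ≤ Du u * (r * k) := Nat.mul_le_mul_left _ hrt
        _ = Du u * k * r := by ring
        _ ≤ M := hstep
    have htleE : t ≤ E := by
      have h1 : r^t ≤ r^E := by
        calc r^t ≤ Du u * r^t := Nat.le_mul_of_pos_left _ (by omega)
          _ ≤ M := hDurt
      exact (Nat.pow_le_pow_iff_right (by omega)).mp h1
    have hDule : Du u ≤ r^(E - t) := by
      have h1 : Du u * r^t ≤ r^(E-t) * r^t := by
        rw [← pow_add]
        have : E - t + t = E := by omega
        rw [this]
        exact hDurt
      exact Nat.le_of_mul_le_mul_right h1 (by positivity)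
    have hvalDu : (Du u).factorization r ≤ E - t := by
      have h1 : r ^ ((Du u).factorization r) ≤ r ^ (E - t) :=
        le_trans (Nat.ordProj_le r (Du_ne_zero u)) hDule
      exact (Nat.pow_le_pow_iff_right (by omega)).mp h1
    rw [hVxE]
    have : ((Du u).factorization r : ℤ) ≤ (E : ℤ) - t := by
      have := hvalDu
      omega
    omega

lemma comp3_good {k : ℕ} (hk : 2 ≤ k) {u x : Fin m → ℚ} (hu : u ≠ 0) (hx : x ≠ 0)
    (hux : u + x ≠ 0) (hM : T3 k u ≤ Mden k x) :
    comp3 k (u + x) ≠ comp3 k ((k:ℚ) • x) := by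
  have hT2 : 2 ≤ T3 k u := by rw [T3]; omega
  have hM2 : 2 ≤ Mden k x := le_trans hT2 hM
  obtain ⟨r, hrmem, hrsup, hrpstar⟩ := Mden_attained hk hM2
  obtain ⟨hrp, hrk⟩ := DenSet_prime hk hrmem
  have hVxneg := DenSet_V_neg hrmem
  obtain ⟨hek, hVE⟩ := eN_pos hrmem
  have hg1 : V r x + (tExp k r : ℤ) ≤ V r u := g1 hk hrp hrk hu hVxneg (by rw [hrsup]; exact hM)
  have ht1 : 1 ≤ tExp k r := by rw [tExp]; omega
  have hVlt : V r x < V r u := by omega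
  have hVux : V r (u + x) = V r x := V_add_eq hrp hu hx hVlt
  -- Mden (u+x) = Mden x
  have hMux : Mden k (u + x) = Mden k x := by
    apply le_antisymm
    · show (DenSet k (u+x)).sup (fun p => p ^ eN p (u+x)) ≤ Mden k x
      apply Finset.sup_le
      intro s hs
      obtain ⟨hsp, hsk⟩ := DenSet_prime hk hs
      have hsV := DenSet_V_neg hs
      by_cases hc : V s x < V s u
      · have he : V s (u + x) = V s x := V_add_eq hsp hu hx hc
        have hmem2 : s ∈ DenSet k x := DenSet_of hsp hsk (by omega)
        have : s ^ eN s (u + x) = s ^ eN s x := by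
          rw [eN, eN, he]
        rw [this]
        exact Finset.le_sup (f := fun p => p ^ eN p x) hmem2
      · push_neg at hc
        have hmin := V_add_ge hsp hu hx hux
        rw [min_eq_left hc] at hmin
        have hVDu := V_ge_neg_valDu hsp hu
        have hVub : -(((Du u).factorization s : ℤ)) ≤ V s (u + x) := le_trans hVDu hmin
        have heN : eN s (u + x) ≤ (Du u).factorization s := by
          rw [eN]
          omega
        have h1 : s ^ eN s (u + x) ≤ s ^ ((Du u).factorization s) :=
          Nat.pow_le_pow_right (by have := hsp.two_le; omega) heN
        have h2 : s ^ ((Du u).factorization s) ≤ Du u := Nat.ordProj_le s (Du_ne_zero u)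
        have h3 : Du u ≤ Mden k x := by
          have : Du u ≤ T3 k u := by rw [T3]; omega
          omega
        omega
    · have hmem2 : r ∈ DenSet k (u + x) := DenSet_of hrp hrk (by omega)
      have heq : r ^ eN r (u + x) = Mden k x := by
        rw [eN, hVux, ← eN, hrsup]
      calc Mden k x = r ^ eN r (u + x) := heq.symm
        _ ≤ Mden k (u + x) := Finset.le_sup (f := fun p => p ^ eN p (u+x)) hmem2
  have hpux : pstar k (u + x) = r := by
    rw [pstar, hMux, ← hrpstar, pstar]
  have hpkx : pstar k ((k:ℚ) • x) = r := by
    rw [pstar, Mden_smul hk hx, ← hrpstar, pstar]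
  have hMkx : Mden k ((k:ℚ) • x) = Mden k x := Mden_smul hk hx
  rw [comp3, comp3, if_pos (by omega : 2 ≤ Mden k (u+x)), if_pos (by omega : 2 ≤ Mden k ((k:ℚ) • x))]
  rw [hpux, hpkx]
  rw [C3_add hk hrp hrk hu hx hg1]
  exact fun h => (C3_smul hk hrp hrk x hx) h.symm

end Comp3


section Finiteness

variable {m : ℕ}

lemma finite_rat (C : ℚ) (D : ℕ) : {z : ℚ | |z| ≤ C ∧ z.den ≤ D}.Finite := by
  classical
  set B : ℤ := ⌈C * D⌉ with hB
  have hfin : (Set.Icc (-B) B ×ˢ Set.Icc 0 D : Set (ℤ × ℕ)).Finite :=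
    (Set.finite_Icc _ _).prod (Set.finite_Icc _ _)
  apply Set.Finite.subset (Set.Finite.preimage
    (f := fun z : ℚ => (z.num, z.den)) ?_ hfin)
  · intro z hz
    obtain ⟨hz1, hz2⟩ := hz
    have hC : 0 ≤ C := le_trans (abs_nonneg z) hz1
    have hnum : |(z.num : ℚ)| ≤ C * D := by
      have h1 : (z.num : ℚ) = z * z.den := by
        have h0 := Rat.num_div_den z
        have hden : ((z.den : ℚ)) ≠ 0 := by positivity
        rw [div_eq_iff hden] at h0
        linarith
      rw [h1, abs_mul, abs_of_nonneg (by positivity : (0:ℚ) ≤ (z.den : ℚ))]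
      have hd : (z.den : ℚ) ≤ (D : ℚ) := by exact_mod_cast hz2
      have := abs_nonneg z
      calc |z| * (z.den:ℚ) ≤ C * (z.den:ℚ) := by
            apply mul_le_mul_of_nonneg_right hz1 (by positivity)
        _ ≤ C * D := by apply mul_le_mul_of_nonneg_left hd hC
    have hnum2 : |z.num| ≤ B := by
      have h2 : ((|z.num| : ℤ) : ℚ) ≤ C * D := by
        rw [show ((|z.num| : ℤ) : ℚ) = |(z.num : ℚ)| by push_cast; rfl]
        exact hnum
      have h3 : ((|z.num| : ℤ) : ℚ) ≤ ((B : ℤ) : ℚ) := le_trans h2 (Int.le_ceil _)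
      exact_mod_cast h3
    constructor
    · simp only [Set.mem_Icc]
      constructor <;> [linarith [abs_nonneg z.num, neg_abs_le z.num]; linarith [le_abs_self z.num]]
    · simp only [Set.mem_Icc]
      exact ⟨Nat.zero_le _, hz2⟩
  · intro a _ b _ h
    exact Rat.ext (congrArg Prod.fst h) (congrArg Prod.snd h)

lemma den_dvd_DD {k : ℕ} (hk : 2 ≤ k) {u x : Fin m → ℚ} (hx : x ≠ 0)
    (hM : Mden k x < T3 k u) (hmu : -((N4 k u : ℕ):ℚ) < mu k x) (i : Fin m) :
    (x i).den ∣ (T3 k u).factorial ^ (T3 k u) * k ^ (N4 k u) := by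
  set DD := (T3 k u).factorial ^ (T3 k u) * k ^ (N4 k u) with hDD
  have hDD0 : DD ≠ 0 := by
    apply Nat.mul_ne_zero
    · exact pow_ne_zero _ (Nat.factorial_ne_zero _)
    · exact pow_ne_zero _ (by omega)
  rw [← Nat.factorization_le_iff_dvd (x i).den_nz hDD0]
  rw [Finsupp.le_def]
  intro p
  by_cases hp : p.Prime
  swap
  · rw [Nat.factorization_eq_zero_of_not_prime _ hp]
    omega
  by_cases hpd : p ∣ (x i).den
  swap
  · rw [Nat.factorization_eq_zero_of_not_dvd hpd]
    omega
  have hxi : x i ≠ 0 := by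
    intro h0
    rw [h0] at hpd
    have h1 : p ∣ 1 := by simpa using hpd
    exact hp.ne_one (Nat.dvd_one.mp h1)
  -- DD.factorization
  have hDDfact : (DD).factorization p
      = T3 k u * ((T3 k u).factorial.factorization p) + N4 k u * (k.factorization p) := by
    rw [hDD, Nat.factorization_mul (pow_ne_zero _ (Nat.factorial_ne_zero _)) (pow_ne_zero _ (by omega)),
      Nat.factorization_pow, Nat.factorization_pow]
    simp
  have hvalrat : padicValRat p (x i) = -(padicValNat p (x i).den : ℤ) := val_of_dvd_den hp hpd
  have hVle : V p x ≤ -(padicValNat p (x i).den : ℤ) := by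
    rw [← hvalrat]
    exact V_le hxi
  have hvd1 : 1 ≤ padicValNat p (x i).den := one_le_valNat_den hp hpd
  have hfd : (x i).den.factorization p = padicValNat p (x i).den := Nat.factorization_def _ hp
  by_cases hpk : p ∣ k
  · -- use mu bound
    have hpmem : p ∈ k.primeFactors := Nat.mem_primeFactors.mpr ⟨hp, hpk, by omega⟩
    have ha0 : 0 < k.factorization p := Nat.Prime.factorization_pos_of_dvd hp (by omega) hpk
    have hrho : mu k x ≤ (V p x : ℚ) / (k.factorization p : ℚ) := by
      rw [mu_def hk]
      exact Finset.inf'_le _ hpmem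
    have haQ : (0:ℚ) < (k.factorization p : ℚ) := by exact_mod_cast ha0
    have hVgt : -(((N4 k u) : ℚ)) * (k.factorization p : ℚ) < (V p x : ℚ) := by
      have h1 : -((N4 k u : ℕ):ℚ) < (V p x : ℚ) / (k.factorization p : ℚ) := lt_of_lt_of_le hmu hrho
      calc -(((N4 k u) : ℚ)) * (k.factorization p : ℚ)
          < ((V p x : ℚ) / (k.factorization p : ℚ)) * (k.factorization p : ℚ) := by
            apply mul_lt_mul_of_pos_right h1 haQ
        _ = (V p x : ℚ) := by field_simp
    have hVZ : -((N4 k u : ℤ) * (k.factorization p : ℤ)) < V p x := by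
      have : (((-((N4 k u : ℤ) * (k.factorization p : ℤ))) : ℤ) : ℚ) < ((V p x : ℤ) : ℚ) := by
        push_cast
        push_cast at hVgt
        linarith
      exact_mod_cast this
    rw [hfd, hDDfact]
    have : (padicValNat p (x i).den : ℤ) < (N4 k u : ℤ) * (k.factorization p : ℤ) := by omega
    have h9 : padicValNat p (x i).den < N4 k u * k.factorization p := by exact_mod_cast this
    omega
  · -- p not dividing k : in DenSet
    have hVneg : V p x < 0 := by omega
    have hmem : p ∈ DenSet k x := DenSet_of hp hpk hVneg
    have hsup : p ^ eN p x ≤ Mden k x := Finset.le_sup (f := fun q => q ^ eN q x) hmem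
    obtain ⟨he1, heV⟩ := eN_pos hmem
    have hpT : p < T3 k u := by
      have h1 : p ≤ p ^ eN p x := by
        calc p = p^1 := (pow_one p).symm
          _ ≤ p ^ eN p x := Nat.pow_le_pow_right (by have := hp.two_le; omega) he1
      omega
    have heT : eN p x < T3 k u := by
      have h1 : 2 ^ eN p x ≤ p ^ eN p x :=
        Nat.pow_le_pow_left hp.two_le _
      have h2 : eN p x < 2 ^ eN p x := Nat.lt_two_pow_self
      omega
    have hfac1 : 1 ≤ (T3 k u).factorial.factorization p := by
      have hdvd : p ∣ (T3 k u).factorial := Nat.dvd_factorial hp.pos (by omega)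
      have := (Nat.Prime.pow_dvd_iff_le_factorization hp (Nat.factorial_ne_zero _)).mp
        ((pow_one p) ▸ hdvd)
      omega
    have hvden : padicValNat p (x i).den ≤ eN p x := by
      rw [eN]
      omega
    rw [hfd, hDDfact]
    calc padicValNat p (x i).den ≤ eN p x := hvden
      _ ≤ T3 k u := by omega
      _ ≤ T3 k u * ((T3 k u).factorial.factorization p) := Nat.le_mul_of_pos_right _ (by omega)
      _ ≤ _ := by omega

lemma badset_finite {k : ℕ} (hk : 2 ≤ k) {u : Fin m → ℚ} (hu : u ≠ 0) :
    {x : Fin m → ℚ | x ≠ 0 ∧ AbsSum x ≤ 8 * AbsSum u + 1 ∧ Mden k x < T3 k u ∧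
      -((N4 k u : ℕ):ℚ) < mu k x}.Finite := by
  set C : ℚ := 8 * AbsSum u + 1 with hC
  set DD := (T3 k u).factorial ^ (T3 k u) * k ^ (N4 k u) with hDD
  have hfin : (Set.univ.pi (fun _ : Fin m => {z : ℚ | |z| ≤ C ∧ z.den ≤ DD})).Finite :=
    Set.Finite.pi (fun _ => finite_rat C DD)
  apply hfin.subset
  intro x hx
  obtain ⟨hx0, hA, hM, hmu⟩ := hx
  rw [Set.mem_univ_pi]
  intro i
  constructor
  · have h1 : |x i| ≤ AbsSum x := by
      rw [AbsSum]
      exact Finset.single_le_sum (f := fun j => |x j|) (fun j _ => abs_nonneg _) (Finset.mem_univ i)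
    exact le_trans h1 hA
  · have hdvd := den_dvd_DD hk hx0 hM hmu i
    have hDD0 : DD ≠ 0 := by
      apply Nat.mul_ne_zero
      · exact pow_ne_zero _ (Nat.factorial_ne_zero _)
      · exact pow_ne_zero _ (by omega)
    exact Nat.le_of_dvd (Nat.pos_of_ne_zero hDD0) hdvd

end Finiteness

end S4

theorem stmt_4 (k m : ℕ) (hk : 2 ≤ k) (hm : 1 ≤ m) :
    ∃ γ : (Fin m → ℚ) → Fin 72,
      ∀ u : Fin m → ℚ, ∀ X : Set (Fin m → ℚ), X.Infinite →
        ∃ x ∈ X, γ (u + x) ≠ γ (k • x) := by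
  classical
  have hcard : Fintype.card ((Bool × Bool) × Fin 3 × Bool) = 24 := by simp
  have hle : Fintype.card ((Bool × Bool) × Fin 3 × Bool) ≤ 72 := by rw [hcard]; omega
  let e := Fintype.equivFin ((Bool × Bool) × Fin 3 × Bool)
  let τ : (Fin m → ℚ) → (Bool × Bool) × Fin 3 × Bool :=
    fun x => (S4.comp2 k x, S4.comp3 k x, S4.comp4 k x)
  have hγne : ∀ a b : Fin m → ℚ, τ a ≠ τ b →
      Fin.castLE hle (e (τ a)) ≠ Fin.castLE hle (e (τ b)) := by
    intro a b hab hc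
    exact hab (e.injective (Fin.castLE_injective hle hc))
  have hτ1 : ∀ a b : Fin m → ℚ, S4.comp2 k a ≠ S4.comp2 k b → τ a ≠ τ b := by
    intro a b h hc
    exact h (congrArg Prod.fst hc)
  have hτ2 : ∀ a b : Fin m → ℚ, S4.comp3 k a ≠ S4.comp3 k b → τ a ≠ τ b := by
    intro a b h hc
    exact h (congrArg (fun t : (Bool × Bool) × Fin 3 × Bool => t.2.1) hc)
  have hτ3 : ∀ a b : Fin m → ℚ, S4.comp4 k a ≠ S4.comp4 k b → τ a ≠ τ b := by
    intro a b h hc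
    exact h (congrArg (fun t : (Bool × Bool) × Fin 3 × Bool => t.2.2) hc)
  have hksmul : ∀ x : Fin m → ℚ, (k • x) = (k:ℚ) • x :=
    fun x => (Nat.cast_smul_eq_nsmul ℚ k x).symm
  refine ⟨fun x => Fin.castLE hle (e (τ x)), ?_⟩
  intro u X hX
  by_cases hu : u = 0
  · obtain ⟨x, hx⟩ := (hX.diff (Set.finite_singleton 0)).nonempty
    have hx0 : x ≠ 0 := by
      intro h
      exact hx.2 (by simp [h])
    refine ⟨x, hx.1, ?_⟩
    rw [hu, zero_add, hksmul]
    exact hγne _ _ (hτ3 _ _ (S4.comp4_good0 hk hx0))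
  · set E : Set (Fin m → ℚ) := {0, -u} ∪ {x | x ≠ 0 ∧ S4.AbsSum x ≤ 8 * S4.AbsSum u + 1 ∧
      S4.Mden k x < S4.T3 k u ∧ -((S4.N4 k u : ℕ):ℚ) < S4.mu k x} with hE
    have hEfin : E.Finite :=
      ((Set.finite_singleton (-u)).insert 0).union (S4.badset_finite hk hu)
    obtain ⟨x, hx⟩ := (hX.diff hEfin).nonempty
    obtain ⟨hxX, hxE⟩ := hx
    refine ⟨x, hxX, ?_⟩
    rw [hE] at hxE
    simp only [Set.mem_union, Set.mem_insert_iff, Set.mem_singleton_iff,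
      Set.mem_setOf_eq, not_or] at hxE
    push_neg at hxE
    obtain ⟨⟨hx0, hxnu⟩, hbad⟩ := hxE
    have hux : u + x ≠ 0 := by
      intro h0
      apply hxnu
      funext i
      have := congrFun h0 i
      simp only [Pi.add_apply, Pi.zero_apply] at this
      simp only [Pi.neg_apply]
      linarith
    rw [hksmul]
    by_cases hA : S4.AbsSum x ≤ 8 * S4.AbsSum u + 1
    · by_cases hM : S4.Mden k x < S4.T3 k u
      · have hmu : S4.mu k x ≤ -((S4.N4 k u : ℕ):ℚ) := hbad hx0 hA hM
        exact hγne _ _ (hτ3 _ _ (S4.comp4_good hk hu hx0 hux hmu))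
      · push_neg at hM
        exact hγne _ _ (hτ2 _ _ (S4.comp3_good hk hu hx0 hux hM))
    · push_neg at hA
      exact hγne _ _ (hτ1 _ _ (S4.comp2_good hk hx0 (le_of_lt hA)))
end

section
/- Let Z be a nonmeagre subset of ℝ with the property of Baire and let k ∈ ℕ, k ≥ 2. Then there is an uncountable set H ⊆ ℝ such that kH ⊆ Z. -/
open Cardinal

/-- `kH`: sums of `k` elements of `H`, repetitions allowed. -/
def kTimes (k : ℕ) (H : Set ℝ) : Set ℝ :=
  {y | ∃ f : Fin k → ℝ, (∀ i, f i ∈ H) ∧ y = ∑ i, f i}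

lemma countable_isMeagre {s : Set ℝ} (hs : s.Countable) : IsMeagre s := by
  rw [IsMeagre, ← Set.biUnion_of_singleton s, Set.compl_iUnion₂]
  exact (countable_bInter_mem hs).2 fun x _ =>
    residual_of_dense_open isOpen_compl_singleton (dense_compl_singleton x)

lemma meagre_affine {M : Set ℝ} (hM : IsMeagre M) (s m : ℝ) (hm : m ≠ 0) :
    IsMeagre ((fun x => s + m * x) ⁻¹' M) := by
  have ho : IsOpenMap (fun x : ℝ => s + m * x) := by
    have h := ((Homeomorph.mulLeft₀ m hm).trans (Homeomorph.addLeft s)).isOpenMap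
    convert h using 1
    ext x; simp
  exact hM.preimage_of_isOpenMap (by continuity) ho

lemma not_meagre_Ioo {a b : ℝ} (h : a < b) : ¬ IsMeagre (Set.Ioo a b) := by
  intro hm
  have hd : Dense ((Set.Ioo a b)ᶜ) := dense_of_mem_residual hm
  have h2 : ((a + b) / 2) ∈ closure ((Set.Ioo a b)ᶜ) := hd _
  rw [closure_compl, isOpen_Ioo.interior_eq] at h2
  exact h2 ⟨by linarith, by linarith⟩

lemma kTimes_countable (j : ℕ) {H : Set ℝ} (hH : H.Countable) : (kTimes j H).Countable := by
  haveI := hH.to_subtype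
  have hsub : kTimes j H ⊆ Set.range (fun f : Fin j → H => ∑ i, (f i : ℝ)) := by
    rintro y ⟨f, hf, rfl⟩
    exact ⟨fun i => ⟨f i, hf i⟩, rfl⟩
  exact (Set.countable_range _).mono hsub

lemma kTimes_insert {k : ℕ} {H : Set ℝ} {x : ℝ} (hx : x ∉ H) {y : ℝ}
    (hy : y ∈ kTimes k (insert x H)) :
    ∃ m ≤ k, ∃ s ∈ kTimes (k - m) H, y = s + (m : ℝ) * x := by
  classical
  obtain ⟨f, hf, rfl⟩ := hy
  set T : Finset (Fin k) := Finset.univ.filter (fun i => f i = x) with hT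
  refine ⟨T.card, le_trans (Finset.card_le_univ T) (by simp), ∑ i ∈ Tᶜ, f i, ?_, ?_⟩
  · have hcard : Tᶜ.card = k - T.card := by
      rw [Finset.card_compl]; simp
    let e : {i // i ∈ Tᶜ} ≃ Fin (k - T.card) := Tᶜ.equivFinOfCardEq hcard
    refine ⟨fun j => f (e.symm j : Fin k), fun j => ?_, ?_⟩
    · have hmem : (e.symm j : Fin k) ∈ Tᶜ := (e.symm j).2
      have hne : f (e.symm j : Fin k) ≠ x := fun hcon =>
        (Finset.mem_compl.1 hmem) (by simp [hT, hcon])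
      rcases hf (e.symm j : Fin k) with h | h
      · exact absurd h hne
      · exact h
    · rw [← Finset.sum_coe_sort Tᶜ (fun i => f i)]
      exact (Equiv.sum_comp e.symm (fun i : {i // i ∈ Tᶜ} => f i)).symm
  · rw [← Finset.sum_compl_add_sum T f]
    congr 1
    rw [Finset.sum_congr rfl (fun i hi => ?_), Finset.sum_const, nsmul_eq_mul]
    · rw [hT, Finset.mem_filter] at hi
      exact hi.2

lemma sum_mem_Ioo {k : ℕ} (hk : 0 < k) {a b : ℝ} (f : Fin k → ℝ)
    (hf : ∀ i, f i ∈ Set.Ioo (a / k) (b / k)) : (∑ i, f i) ∈ Set.Ioo a b := by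
  have hk' : (k : ℝ) ≠ 0 := Nat.cast_ne_zero.2 hk.ne'
  have hne : (Finset.univ : Finset (Fin k)).Nonempty := by
    simpa [Finset.univ_nonempty_iff] using Fin.pos_iff_nonempty.1 hk
  constructor
  · have := Finset.sum_lt_sum_of_nonempty hne (f := fun _ => a / k) (g := f)
      (fun i _ => (hf i).1)
    simpa [Finset.sum_const, nsmul_eq_mul, mul_div_cancel₀ _ hk'] using this
  · have := Finset.sum_lt_sum_of_nonempty hne (f := f) (g := fun _ => b / k)
      (fun i _ => (hf i).2)
    simpa [Finset.sum_const, nsmul_eq_mul, mul_div_cancel₀ _ hk'] using this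

theorem stmt_14 (Z : Set ℝ) (hZnm : ¬ IsMeagre Z)
    (hZbaire : ∃ (U M : Set ℝ), IsOpen U ∧ IsMeagre M ∧ Z = symmDiff U M)
    (k : ℕ) (hk : 2 ≤ k) :
    ∃ H : Set ℝ, ℵ₁ ≤ #H ∧ kTimes k H ⊆ Z := by
  classical
  obtain ⟨U, M, hU, hM, hZ⟩ := hZbaire
  have hkpos : 0 < k := by omega
  -- U is nonempty
  have hUne : U.Nonempty := by
    rw [Set.nonempty_iff_ne_empty]
    intro h
    apply hZnm
    have hsd : symmDiff (∅ : Set ℝ) M = M := by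
      ext y; simp [Set.mem_symmDiff]
    rw [hZ, h, hsd]
    exact hM
  obtain ⟨u, hu⟩ := hUne
  obtain ⟨ε, hε, hball⟩ := Metric.isOpen_iff.1 hU u hu
  set a := u - ε with ha
  set b := u + ε with hb
  have hab : a < b := by rw [ha, hb]; linarith
  have hIoo : Set.Ioo a b ⊆ U := by
    rw [← Real.ball_eq_Ioo]; exact hball
  set I := Set.Ioo (a / k) (b / k) with hI
  set S : Set (Set ℝ) := {H | H ⊆ I ∧ ∀ y ∈ kTimes k H, y ∉ M} with hS
  -- Zorn's lemma
  have hzorn : ∀ c ⊆ S, IsChain (· ⊆ ·) c → c.Nonempty →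
      ∃ ub ∈ S, ∀ s ∈ c, s ⊆ ub := by
    intro c hcS hchain _
    refine ⟨⋃₀ c, ⟨?_, ?_⟩, fun s hs => Set.subset_sUnion_of_mem hs⟩
    · exact Set.sUnion_subset fun t ht => (hcS ht).1
    · rintro y ⟨f, hf, rfl⟩
      -- all f i lie in some common member of the chain
      have hchoice : ∀ i, ∃ t ∈ c, f i ∈ t := fun i => by
        obtain ⟨t, ht, hft⟩ := hf i; exact ⟨t, ht, hft⟩
      choose g hg hfg using hchoice
      have hfin : (Set.range g).Finite := Set.finite_range g
      have hne : (Set.range g).Nonempty := ⟨g ⟨0, hkpos⟩, Set.mem_range_self _⟩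
      obtain ⟨t, htr, htmax⟩ := hfin.exists_maximalFor id _ hne
      have htc : t ∈ c := by obtain ⟨i, rfl⟩ := htr; exact hg i
      have hall : ∀ i, f i ∈ t := by
        intro i
        rcases hchain.total htc (hg i) with h | h
        · have heq : t = g i := h.antisymm (htmax (Set.mem_range_self i) h)
          rw [heq]; exact hfg i
        · exact h (hfg i)
      exact (hcS htc).2 _ ⟨f, hall, rfl⟩
  have hempty : (∅ : Set ℝ) ∈ S := by
    refine ⟨Set.empty_subset _, ?_⟩
    rintro y ⟨f, hf, rfl⟩
    exact absurd (hf ⟨0, hkpos⟩) (Set.notMem_empty _)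
  obtain ⟨Hm, -, hmax⟩ := zorn_subset_nonempty S hzorn ∅ hempty
  have hHmS : Hm ∈ S := hmax.1
  refine ⟨Hm, ?_, ?_⟩
  · -- Hm is uncountable
    by_contra hcon
    rw [not_le, ← countable_iff_lt_aleph_one] at hcon
    -- the residual "good" set
    set R : Set ℝ := (⋂ m ∈ (Finset.Icc 1 k : Finset ℕ),
        ⋂ s ∈ kTimes (k - m) Hm, {x : ℝ | s + (m : ℝ) * x ∉ M}) ∩ Hmᶜ with hR
    have hRres : R ∈ residual ℝ := by
      refine Filter.inter_mem ?_ (countable_isMeagre hcon)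
      refine (countable_bInter_mem (Finset.Icc 1 k : Finset ℕ).countable_toSet).2
        fun m hm => ?_
      refine (countable_bInter_mem (kTimes_countable (k - m) hcon)).2 fun s _ => ?_
      have hm1 : 1 ≤ m := by
        rw [Finset.mem_coe, Finset.mem_Icc] at hm; exact hm.1
      have hmne : (m : ℝ) ≠ 0 := Nat.cast_ne_zero.2 (by omega)
      have := meagre_affine hM s (m : ℝ) hmne
      rw [IsMeagre] at this
      exact this
    -- I ∩ R is nonempty
    have hIR : (I ∩ R).Nonempty := by
      rw [Set.nonempty_iff_ne_empty]
      intro hcontra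
      have hsub : I ⊆ Rᶜ := by
        intro x hx
        intro hxR
        exact Set.eq_empty_iff_forall_notMem.1 hcontra x ⟨hx, hxR⟩
      have hRc : IsMeagre Rᶜ := by rw [IsMeagre, compl_compl]; exact hRres
      have : IsMeagre I := hRc.mono hsub
      exact not_meagre_Ioo (by rw [hI] at *; gcongr) this
    obtain ⟨x, hxI, hxR⟩ := hIR
    have hxHm : x ∉ Hm := hxR.2
    -- insert x Hm ∈ S
    have hins : insert x Hm ∈ S := by
      refine ⟨Set.insert_subset hxI hHmS.1, ?_⟩
      intro y hy
      obtain ⟨m, hmk, s, hsm, rfl⟩ := kTimes_insert hxHm hy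
      rcases Nat.eq_zero_or_pos m with rfl | hmpos
      · simpa using hHmS.2 s (by simpa using hsm)
      · have hmIcc : m ∈ (Finset.Icc 1 k : Finset ℕ) := Finset.mem_Icc.2 ⟨hmpos, hmk⟩
        have := hxR.1
        rw [Set.mem_iInter₂] at this
        have := this m hmIcc
        rw [Set.mem_iInter₂] at this
        exact this s hsm
    have : insert x Hm ⊆ Hm := hmax.2 hins (Set.subset_insert x Hm)
    exact hxHm (this (Set.mem_insert x Hm))
  · -- kTimes k Hm ⊆ Z
    rintro y hy
    obtain ⟨f, hf, rfl⟩ := hy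
    have hyI : (∑ i, f i) ∈ Set.Ioo a b :=
      sum_mem_Ioo hkpos f fun i => hHmS.1 (hf i)
    have hyM : (∑ i, f i) ∉ M := hHmS.2 _ ⟨f, hf, rfl⟩
    rw [hZ]
    exact Set.mem_symmDiff.2 (Or.inl ⟨hIoo hyI, hyM⟩)
end

section
/- Let A = {0,...,m−1}^ℕ with the uniform product measure μ and coordinatewise addition mod m, and let P ⊆ A be measurable with μ(P) > 0. Then there exist T ⊆ P with μ(T) > 0 and an infinite set Y ⊆ ℕ such that for every α ∈ T and every β ∈ A, if β(n) = α(n) for all n ∈ ℕ \ Y, then β ∈ P. -/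
open MeasureTheory ENNReal

instance (m : ℕ) : MeasurableSpace (ZMod m) := ⊤

namespace Stmt17Aux

instance (m : ℕ) : MeasurableSingletonClass (ZMod m) := ⟨fun _ => trivial⟩

variable {m : ℕ}

instance : Countable (ZMod m) := by
  cases m
  · exact (inferInstance : Countable ℤ)
  · exact (inferInstance : Countable (Fin _))

/-- the function that is `c` at `y` and `0` elsewhere -/
def sgl (y : ℕ) (c : ZMod m) : ℕ → ZMod m := fun n => if n = y then c else 0

lemma sgl_self (y : ℕ) (c : ZMod m) : sgl y c y = c := if_pos rfl
lemma sgl_ne {y n : ℕ} (h : n ≠ y) (c : ZMod m) : sgl y c n = 0 := if_neg h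
lemma sgl_zero (y : ℕ) : (sgl y (0 : ZMod m)) = 0 := by
  funext n; by_cases h : n = y <;> simp [sgl, h]
lemma sgl_add (y : ℕ) (c c' : ZMod m) : sgl y c + sgl y c' = sgl y (c + c') := by
  funext n; by_cases h : n = y <;> simp [sgl, h, Pi.add_apply]

lemma measurable_addRight (g : ℕ → ZMod m) : Measurable (fun α : ℕ → ZMod m => α + g) :=
  measurable_pi_iff.mpr fun n =>
    (measurable_from_top (f := fun x : ZMod m => x + g n)).comp (measurable_pi_apply n)

/-- cylinder sets -/
def Cyl (F : Finset ℕ) (d : ℕ → ZMod m) : Set (ℕ → ZMod m) := {α | ∀ n ∈ F, α n = d n}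

lemma measurableSet_cyl (F : Finset ℕ) (d : ℕ → ZMod m) : MeasurableSet (Cyl F d) := by
  have : Cyl F d = ⋂ n ∈ F, (fun α : ℕ → ZMod m => α n) ⁻¹' {d n} := by
    ext α; simp [Cyl]
  rw [this]
  exact MeasurableSet.biInter F.countable_toSet fun n _ =>
    (measurable_pi_apply n) (by trivial)

lemma generateFrom_cyl :
    (by infer_instance : MeasurableSpace (ℕ → ZMod m)) =
      MeasurableSpace.generateFrom {S | ∃ F d, S = Cyl (m := m) F d} := by
  apply le_antisymm
  · show MeasurableSpace.pi ≤ _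
    rw [MeasurableSpace.pi]
    refine iSup_le fun n => ?_
    intro s hs
    rw [MeasurableSpace.measurableSet_comap] at hs
    obtain ⟨s', -, rfl⟩ := hs
    have : (fun α : ℕ → ZMod m => α n) ⁻¹' s' = ⋃ c ∈ s', Cyl {n} (fun _ => c) := by
      ext α; simp [Cyl]
    rw [this]
    exact MeasurableSet.biUnion s'.to_countable fun c _ =>
      MeasurableSpace.measurableSet_generateFrom ⟨{n}, fun _ => c, rfl⟩
  · rw [MeasurableSpace.generateFrom_le_iff]
    rintro S ⟨F, d, rfl⟩
    exact measurableSet_cyl F d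

lemma isPiSystem_cyl : IsPiSystem {S | ∃ F d, S = Cyl (m := m) F d} := by
  rintro S₁ ⟨F₁, d₁, rfl⟩ S₂ ⟨F₂, d₂, rfl⟩ hne
  obtain ⟨γ, hγ₁, hγ₂⟩ := hne
  refine ⟨F₁ ∪ F₂, fun n => if n ∈ F₁ then d₁ n else d₂ n, ?_⟩
  ext α
  simp only [Set.mem_inter_iff, Cyl, Set.mem_setOf_eq, Finset.mem_union]
  constructor
  · rintro ⟨h1, h2⟩ n hn
    by_cases h : n ∈ F₁
    · simp [h, h1 n h]
    · simp [h, h2 n (hn.resolve_left h)]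
  · intro h
    constructor
    · intro n hn; have := h n (Or.inl hn); simpa [hn] using this
    · intro n hn
      have := h n (Or.inr hn)
      by_cases h' : n ∈ F₁
      · rw [this, if_pos h']
        rw [← hγ₁ n h', hγ₂ n hn]
      · rwa [if_neg h'] at this

lemma isProbability (μ : Measure (ℕ → ZMod m))
    (hμ : ∀ (F : Finset ℕ) (d : ℕ → ZMod m), μ (Cyl F d) = (1 / (m : ℝ≥0∞)) ^ F.card) :
    IsProbabilityMeasure μ := by
  constructor
  have h := hμ ∅ 0
  have he : Cyl (m := m) ∅ 0 = Set.univ := by ext α; simp [Cyl]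
  rw [he] at h
  simpa using h

lemma map_add_right (μ : Measure (ℕ → ZMod m))
    (hμ : ∀ (F : Finset ℕ) (d : ℕ → ZMod m), μ (Cyl F d) = (1 / (m : ℝ≥0∞)) ^ F.card)
    (g : ℕ → ZMod m) : μ.map (fun α => α + g) = μ := by
  haveI := isProbability μ hμ
  haveI : IsProbabilityMeasure (μ.map (fun α => α + g)) :=
    Measure.isProbabilityMeasure_map (measurable_addRight g).aemeasurable
  refine ext_of_generate_finite _ generateFrom_cyl isPiSystem_cyl ?_ (by simp [measure_univ])
  rintro S ⟨F, d, rfl⟩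
  rw [Measure.map_apply (measurable_addRight g) (measurableSet_cyl F d)]
  have : (fun α : ℕ → ZMod m => α + g) ⁻¹' Cyl F d = Cyl F (d - g) := by
    ext α
    simp only [Cyl, Set.mem_preimage, Set.mem_setOf_eq, Pi.add_apply, Pi.sub_apply]
    constructor <;> intro h n hn
    · rw [← h n hn]; ring
    · rw [h n hn]; ring
  rw [this, hμ, hμ]

/-- "open" in the product-of-discrete sense -/
def IsOp (V : Set (ℕ → ZMod m)) : Prop :=
  ∀ α ∈ V, ∃ M : ℕ, ∀ β : ℕ → ZMod m, (∀ n, n < M → β n = α n) → β ∈ V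

def Wn (V : Set (ℕ → ZMod m)) (M : ℕ) : Set (ℕ → ZMod m) :=
  {α | ∀ β : ℕ → ZMod m, (∀ n, n < M → β n = α n) → β ∈ V}

lemma Wn_subset (V : Set (ℕ → ZMod m)) (M : ℕ) : Wn V M ⊆ V :=
  fun α hα => hα α fun _ _ => rfl

lemma Wn_mono (V : Set (ℕ → ZMod m)) {M M' : ℕ} (h : M ≤ M') : Wn V M ⊆ Wn V M' :=
  fun _ hα β hβ => hα β fun n hn => hβ n (lt_of_lt_of_le hn h)

lemma mem_Wn_congr {V : Set (ℕ → ZMod m)} {M : ℕ} {α α' : ℕ → ZMod m}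
    (h : ∀ n, n < M → α n = α' n) : α ∈ Wn V M ↔ α' ∈ Wn V M := by
  constructor <;> intro hα β hβ <;> refine hα β fun n hn => ?_
  · rw [hβ n hn, ← h n hn]
  · rw [hβ n hn, h n hn]

lemma measurableSet_fin (M : ℕ) (s : Set (Fin M → ZMod m)) : MeasurableSet s := by
  have h1 : s = ⋃ f ∈ s, {f} := by simp
  rw [h1]
  refine MeasurableSet.biUnion (Set.to_countable s) fun f _ => ?_
  have h2 : ({f} : Set (Fin M → ZMod m)) = ⋂ i, (fun g : Fin M → ZMod m => g i) ⁻¹' {f i} := by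
    ext g; simp [funext_iff]
  rw [h2]
  exact MeasurableSet.iInter fun i => measurable_pi_apply i (by trivial)

lemma measurableSet_Wn (V : Set (ℕ → ZMod m)) (M : ℕ) : MeasurableSet (Wn V M) := by
  have hr : Measurable (fun (α : ℕ → ZMod m) (i : Fin M) => α i) :=
    measurable_pi_lambda _ fun i => measurable_pi_apply (i : ℕ)
  have : Wn V M = (fun (α : ℕ → ZMod m) (i : Fin M) => α i) ⁻¹'
      ((fun (α : ℕ → ZMod m) (i : Fin M) => α i) '' Wn V M) := by
    apply Set.Subset.antisymm (Set.subset_preimage_image _ _)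
    rintro α ⟨α', hα', hEq⟩
    exact (mem_Wn_congr fun n hn => (congrFun hEq ⟨n, hn⟩ : _)).mp hα'
  rw [this]
  exact hr (measurableSet_fin M _)

lemma iUnion_Wn {V : Set (ℕ → ZMod m)} (hV : IsOp V) : ⋃ M, Wn V M = V := by
  apply Set.Subset.antisymm (Set.iUnion_subset fun M => Wn_subset V M)
  intro α hα
  obtain ⟨M, hM⟩ := hV α hα
  exact Set.mem_iUnion.mpr ⟨M, hM⟩

lemma IsOp.measurableSet {V : Set (ℕ → ZMod m)} (hV : IsOp V) : MeasurableSet V := by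
  rw [← iUnion_Wn hV]; exact MeasurableSet.iUnion fun M => measurableSet_Wn V M

lemma IsOp.preimage_add {V : Set (ℕ → ZMod m)} (hV : IsOp V) (g : ℕ → ZMod m) :
    IsOp ((fun α => α + g) ⁻¹' V) := by
  intro α hα
  obtain ⟨M, hM⟩ := hV (α + g) hα
  exact ⟨M, fun β hβ => hM (β + g) fun n hn => by simp [Pi.add_apply, hβ n hn]⟩

lemma isOp_iUnion {ι : Sort*} {V : ι → Set (ℕ → ZMod m)} (h : ∀ i, IsOp (V i)) :
    IsOp (⋃ i, V i) := by
  intro α hα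
  obtain ⟨i, hi⟩ := Set.mem_iUnion.mp hα
  obtain ⟨M, hM⟩ := h i α hi
  exact ⟨M, fun β hβ => Set.mem_iUnion.mpr ⟨i, hM β hβ⟩⟩

/-- saturation at one coordinate -/
def satAt (y : ℕ) (V : Set (ℕ → ZMod m)) : Set (ℕ → ZMod m) :=
  ⋃ c : ZMod m, (fun α => α + sgl y c) ⁻¹' V

lemma mem_satAt {y : ℕ} {V : Set (ℕ → ZMod m)} {β : ℕ → ZMod m} :
    β ∈ satAt y V ↔ ∃ c, β + sgl y c ∈ V := Set.mem_iUnion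

lemma IsOp.satAt {V : Set (ℕ → ZMod m)} (hV : IsOp V) (y : ℕ) : IsOp (satAt y V) :=
  isOp_iUnion fun c => hV.preimage_add (sgl y c)

lemma subset_satAt (y : ℕ) (V : Set (ℕ → ZMod m)) : V ⊆ satAt y V := fun α hα =>
  mem_satAt.mpr ⟨0, by rw [sgl_zero, add_zero]; exact hα⟩

/-- closedness under changing coordinate `y` -/
def SatC (y : ℕ) (S : Set (ℕ → ZMod m)) : Prop :=
  ∀ β (c : ZMod m), β ∈ S → β + sgl y c ∈ S

lemma satC_satAt (y : ℕ) (V : Set (ℕ → ZMod m)) : SatC y (satAt y V) := by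
  intro β c hβ
  obtain ⟨c', hc'⟩ := mem_satAt.mp hβ
  refine mem_satAt.mpr ⟨c' - c, ?_⟩
  rw [add_assoc, sgl_add, show c + (c' - c) = c' from by ring]
  exact hc'

lemma SatC.satAt {y' : ℕ} {S : Set (ℕ → ZMod m)} (h : SatC y' S) (y : ℕ) :
    SatC y' (satAt y S) := by
  intro β c hβ
  obtain ⟨c', hc'⟩ := mem_satAt.mp hβ
  refine mem_satAt.mpr ⟨c', ?_⟩
  rw [show β + sgl y' c + sgl y c' = (β + sgl y c') + sgl y' c from by ring]
  exact h _ _ hc'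

lemma le_step [NeZero m] (μ : Measure (ℕ → ZMod m)) [IsProbabilityMeasure μ]
    (hinv : ∀ (g : ℕ → ZMod m) (S : Set (ℕ → ZMod m)), MeasurableSet S →
      μ ((fun α => α + g) ⁻¹' S) = μ S)
    (V : Set (ℕ → ZMod m)) (hV : IsOp V) (M₀ : ℕ) (δ : ℝ≥0∞) (hδ : δ ≠ 0) :
    ∃ y, M₀ < y ∧ μ (satAt y V) ≤ μ V + δ := by
  have hmtop : (m : ℝ≥0∞) ≠ ∞ := natCast_ne_top m
  have hm0 : (m : ℝ≥0∞) ≠ 0 := Nat.cast_ne_zero.mpr (NeZero.ne m)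
  set δ' := δ / m with hδ'def
  have hδ'0 : δ' ≠ 0 := by
    rw [hδ'def, Ne, ENNReal.div_eq_zero_iff]
    push_neg
    exact ⟨hδ, hmtop⟩
  have hVmeas := hV.measurableSet
  obtain ⟨M, hMgt, hMle⟩ : ∃ M, M₀ < M ∧ μ (V \ Wn V M) ≤ δ' := by
    by_cases hsmall : μ V ≤ δ'
    · exact ⟨M₀ + 1, Nat.lt_succ_self _,
        le_trans (measure_mono Set.diff_subset) hsmall⟩
    · push_neg at hsmall
      have hsup : μ V = ⨆ M, μ (Wn V M) := by
        conv_lhs => rw [← iUnion_Wn hV]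
        exact Directed.measure_iUnion
          ((monotone_nat_of_le_succ fun M => Wn_mono V (Nat.le_succ M)).directed_le)
      have hlt : μ V - δ' < ⨆ M, μ (Wn V M) := by
        rw [← hsup]
        exact ENNReal.sub_lt_self (measure_ne_top μ V)
          (lt_of_le_of_lt zero_le hsmall).ne' hδ'0
      obtain ⟨M₁, hM₁⟩ := lt_iSup_iff.mp hlt
      refine ⟨max M₁ (M₀ + 1), lt_of_lt_of_le (Nat.lt_succ_self M₀) (le_max_right _ _), ?_⟩
      have h1 : μ (Wn V M₁) ≤ μ (Wn V (max M₁ (M₀ + 1))) :=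
        measure_mono (Wn_mono V (le_max_left _ _))
      rw [measure_diff (Wn_subset V _) (measurableSet_Wn V _).nullMeasurableSet
        (measure_ne_top μ _), tsub_le_iff_right]
      calc μ V ≤ (μ V - δ') + δ' := le_tsub_add
        _ ≤ μ (Wn V (max M₁ (M₀ + 1))) + δ' := by
            exact add_le_add_left (le_trans hM₁.le h1) δ'
        _ = δ' + μ (Wn V (max M₁ (M₀ + 1))) := add_comm _ _
  refine ⟨M, hMgt, ?_⟩
  have hincl : satAt M V ⊆ Wn V M ∪ ⋃ c : ZMod m, (fun α => α + sgl M c) ⁻¹' (V \ Wn V M) := by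
    intro β hβ
    obtain ⟨c, hc⟩ := mem_satAt.mp hβ
    by_cases hw : β + sgl M c ∈ Wn V M
    · left
      refine (mem_Wn_congr (α := β + sgl M c) (α' := β) (fun n hn => ?_)).mp hw
      show β n + sgl M c n = β n
      rw [sgl_ne (Nat.ne_of_lt hn) c, add_zero]
    · right
      exact Set.mem_iUnion.mpr ⟨c, ⟨hc, hw⟩⟩
  have hdiffmeas : MeasurableSet (V \ Wn V M) := hVmeas.diff (measurableSet_Wn V M)
  calc μ (satAt M V)
      ≤ μ (Wn V M) + μ (⋃ c : ZMod m, (fun α => α + sgl M c) ⁻¹' (V \ Wn V M)) :=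
        le_trans (measure_mono hincl) (measure_union_le _ _)
    _ ≤ μ (Wn V M) + ∑ c : ZMod m, μ ((fun α => α + sgl M c) ⁻¹' (V \ Wn V M)) :=
        add_le_add_right (measure_iUnion_fintype_le μ _) _
    _ = μ (Wn V M) + ∑ _c : ZMod m, μ (V \ Wn V M) := by
        congr 1
        exact Finset.sum_congr rfl fun c _ => hinv (sgl M c) _ hdiffmeas
    _ ≤ μ V + δ := by
        rw [Finset.sum_const, Finset.card_univ, ZMod.card m, nsmul_eq_mul]
        refine add_le_add (measure_mono (Wn_subset V M)) ?_
        calc (m : ℝ≥0∞) * μ (V \ Wn V M) ≤ (m : ℝ≥0∞) * δ' := by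
              exact mul_le_mul_right hMle _
          _ ≤ δ := ENNReal.mul_div_le

lemma isOp_of_isOpen [TopologicalSpace (ZMod m)] {V : Set (ℕ → ZMod m)} (hV : IsOpen V) :
    IsOp V := by
  intro α hα
  obtain ⟨I, u, hu, hsub⟩ := isOpen_pi_iff.mp hV α hα
  refine ⟨(I.sup id) + 1, fun β hβ => hsub (Set.mem_pi.mpr fun n hn => ?_)⟩
  rw [hβ n (Nat.lt_succ_of_le (Finset.le_sup (f := id) hn))]
  exact (hu n hn).2

end Stmt17Aux

open Stmt17Aux

theorem stmt_17 (m : ℕ) (hm : 2 ≤ m) (μ : Measure (ℕ → ZMod m))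
    -- `μ` is the product measure giving each digit uniform measure `1/m`
    (hμ : ∀ (F : Finset ℕ) (d : ℕ → ZMod m),
      μ {α | ∀ n ∈ F, α n = d n} = (1 / (m : ℝ≥0∞)) ^ F.card)
    (P : Set (ℕ → ZMod m)) (hP : NullMeasurableSet P μ) (hPpos : 0 < μ P) :
    ∃ (T : Set (ℕ → ZMod m)) (Y : Set ℕ), T ⊆ P ∧ Y.Infinite ∧ 0 < μ T ∧
      ∀ α ∈ T, ∀ β : ℕ → ZMod m, (∀ n ∉ Y, β n = α n) → β ∈ P := by
  classical
  haveI : NeZero m := ⟨by omega⟩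
  haveI : IsProbabilityMeasure μ := isProbability μ hμ
  letI : TopologicalSpace (ZMod m) := ⊥
  haveI : DiscreteTopology (ZMod m) := ⟨rfl⟩
  haveI : BorelSpace (ZMod m) := ⟨borel_eq_top_of_discrete.symm⟩
  haveI : BorelSpace (ℕ → ZMod m) := Pi.borelSpace
  have hinv : ∀ (g : ℕ → ZMod m) (S : Set (ℕ → ZMod m)), MeasurableSet S →
      μ ((fun α => α + g) ⁻¹' S) = μ S := by
    intro g S hS
    conv_rhs => rw [← map_add_right μ hμ g]
    rw [Measure.map_apply (measurable_addRight g) hS]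
  set a := μ P with ha
  have ha0 : a ≠ 0 := hPpos.ne'
  have hatop : a ≠ ∞ := measure_ne_top μ P
  have ha1 : a ≤ 1 := prob_le_one
  have haq : a / 4 ≠ 0 := by
    rw [Ne, ENNReal.div_eq_zero_iff]; push_neg
    exact ⟨ha0, by norm_num⟩
  have haqtop : a / 4 ≠ ∞ := by
    refine (ENNReal.div_lt_top hatop (by norm_num)).ne
  -- choose the starting open set
  have hlt : μ Pᶜ < μ Pᶜ + a / 4 := ENNReal.lt_add_right (measure_ne_top μ _) haq
  obtain ⟨U₀, hU₀sub, hU₀open, hU₀lt⟩ := Set.exists_isOpen_lt_of_lt Pᶜ _ hlt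
  have hU₀ : IsOp U₀ := isOp_of_isOpen hU₀open
  -- the recursive construction
  have hstep : ∀ (k : ℕ) (p : {q : ℕ × Set (ℕ → ZMod m) // IsOp q.2}),
      ∃ y, p.1.1 < y ∧ μ (satAt y p.1.2) ≤ μ p.1.2 + a / 2 ^ (k + 3) := by
    intro k p
    refine le_step μ hinv p.1.2 p.2 p.1.1 _ ?_
    rw [Ne, ENNReal.div_eq_zero_iff]; push_neg
    exact ⟨ha0, ENNReal.pow_ne_top ENNReal.ofNat_ne_top⟩
  let next : ∀ (_ : ℕ), {q : ℕ × Set (ℕ → ZMod m) // IsOp q.2} →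
      {q : ℕ × Set (ℕ → ZMod m) // IsOp q.2} :=
    fun k p => ⟨((hstep k p).choose, satAt (hstep k p).choose p.1.2), p.2.satAt _⟩
  let f : ℕ → {q : ℕ × Set (ℕ → ZMod m) // IsOp q.2} := fun k => Nat.rec ⟨(0, U₀), hU₀⟩ next k
  let yseq : ℕ → ℕ := fun k => (f (k + 1)).1.1
  let Vseq : ℕ → Set (ℕ → ZMod m) := fun k => (f k).1.2
  have hV0 : Vseq 0 = U₀ := rfl
  have hVs : ∀ k, Vseq (k + 1) = satAt (yseq k) (Vseq k) := fun k => rfl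
  have hIsOp : ∀ k, IsOp (Vseq k) := fun k => (f k).2
  have hmeasb : ∀ k, μ (Vseq (k + 1)) ≤ μ (Vseq k) + a / 2 ^ (k + 3) :=
    fun k => (hstep k (f k)).choose_spec.2
  have hysm : StrictMono yseq :=
    strictMono_nat_of_lt_succ fun k => (hstep (k + 1) (f (k + 1))).choose_spec.1
  -- measure bound by induction
  have hb : ∀ k, μ (Vseq k) + a / 2 ^ (k + 2) ≤ μ U₀ + a / 4 := by
    intro k
    induction k with
    | zero =>
      rw [hV0, show ((2 : ℝ≥0∞)) ^ (0 + 2) = 4 by norm_num]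
    | succ k ih =>
      have key : a / 2 ^ (k + 3) + a / 2 ^ (k + 3) = a / 2 ^ (k + 2) := by
        rw [ENNReal.div_add_div_same, ← two_mul, pow_succ,
          mul_comm ((2 : ℝ≥0∞) ^ (k + 2)) 2,
          ENNReal.mul_div_mul_left _ _ two_ne_zero ENNReal.ofNat_ne_top]
      calc μ (Vseq (k + 1)) + a / 2 ^ (k + 3)
          ≤ (μ (Vseq k) + a / 2 ^ (k + 3)) + a / 2 ^ (k + 3) :=
            add_le_add_left (hmeasb k) _
        _ = μ (Vseq k) + a / 2 ^ (k + 2) := by rw [add_assoc, key]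
        _ ≤ μ U₀ + a / 4 := ih
  have hVmono : ∀ k, Vseq k ⊆ Vseq (k + 1) := fun k => hVs k ▸ subset_satAt (yseq k) (Vseq k)
  have hUmeas : MeasurableSet (⋃ k, Vseq k) :=
    MeasurableSet.iUnion fun k => (hIsOp k).measurableSet
  have hU1 : μ (⋃ k, Vseq k) < 1 := by
    have hUa : μ (⋃ k, Vseq k) ≤ μ U₀ + a / 4 := by
      rw [Directed.measure_iUnion ((monotone_nat_of_le_succ hVmono).directed_le)]
      exact iSup_le fun k => le_trans (le_add_right le_rfl) (hb k)
    have h2 : μ U₀ + a / 4 < (μ Pᶜ + a / 4) + a / 4 :=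
      ENNReal.add_lt_add_right haqtop hU₀lt
    have h44 : a / 4 + a / 4 = a / 2 := by
      rw [ENNReal.div_add_div_same, ← two_mul, show (4 : ℝ≥0∞) = 2 * 2 by norm_num,
        ENNReal.mul_div_mul_left _ _ two_ne_zero ENNReal.ofNat_ne_top]
    have h3 : (μ Pᶜ + a / 4) + a / 4 = μ Pᶜ + a / 2 := by rw [add_assoc, h44]
    have h4 : μ Pᶜ + a / 2 < μ Pᶜ + a :=
      ENNReal.add_lt_add_left (measure_ne_top μ _) (ENNReal.half_lt_self ha0 hatop)
    have h5 : μ Pᶜ + a = 1 := by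
      rw [prob_compl_eq_one_sub₀ hP, ← ha, tsub_add_cancel_of_le ha1]
    calc μ (⋃ k, Vseq k) ≤ μ U₀ + a / 4 := hUa
      _ < (μ Pᶜ + a / 4) + a / 4 := h2
      _ = μ Pᶜ + a / 2 := h3
      _ < μ Pᶜ + a := h4
      _ = 1 := h5
  -- saturation closedness
  have hSatC : ∀ k i, i < k → SatC (yseq i) (Vseq k) := by
    intro k
    induction k with
    | zero => intro i h; exact absurd h (Nat.not_lt_zero i)
    | succ k ih =>
      intro i hi
      rw [hVs k]
      rcases Nat.lt_succ_iff_lt_or_eq.mp hi with h | h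
      · exact (ih i h).satAt _
      · subst h; exact satC_satAt _ _
  -- finite change lemma
  have hfin : ∀ (j k : ℕ) (γ δ' : ℕ → ZMod m), γ ∈ Vseq k →
      (∀ n, (∀ i, i < j → n ≠ yseq i) → δ' n = γ n) → δ' ∈ Vseq (max k j) := by
    intro j
    induction j with
    | zero =>
      intro k γ δ' hγ h
      have hdg : δ' = γ := funext fun n => h n fun i hi => absurd hi (Nat.not_lt_zero i)
      rw [hdg, Nat.max_zero]; exact hγ
    | succ j ih =>
      intro k γ δ' hγ h
      set δ'' := Function.update δ' (yseq j) (γ (yseq j)) with hδ''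
      have h'' : ∀ n, (∀ i, i < j → n ≠ yseq i) → δ'' n = γ n := by
        intro n hn
        by_cases hny : n = yseq j
        · subst hny; rw [hδ'']; exact Function.update_self _ _ _
        · rw [hδ'', Function.update_of_ne hny]
          refine h n fun i hi => ?_
          rcases Nat.lt_succ_iff_lt_or_eq.mp hi with h' | h'
          · exact hn i h'
          · subst h'; exact hny
      have hδ''mem : δ'' ∈ Vseq (max k j) := ih k γ δ'' hγ h''
      have hrepr : δ' = δ'' + sgl (yseq j) (δ' (yseq j) - γ (yseq j)) := by
        funext n
        show δ' n = δ'' n + sgl (yseq j) (δ' (yseq j) - γ (yseq j)) n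
        by_cases hny : n = yseq j
        · subst hny
          rw [hδ'', Function.update_self, sgl_self]
          ring
        · rw [sgl_ne hny, add_zero, hδ'', Function.update_of_ne hny]
      rcases lt_or_ge j k with hjk | hkj
      · have hmax : max k j = k := Nat.max_eq_left hjk.le
        have hmax' : max k (j + 1) = k := Nat.max_eq_left (Nat.succ_le_of_lt hjk)
        rw [hmax', hrepr]
        exact hSatC k j hjk δ'' _ (hmax ▸ hδ''mem)
      · have hmax : max k j = j := Nat.max_eq_right hkj
        have hmax' : max k (j + 1) = j + 1 := Nat.max_eq_right (le_trans hkj (Nat.le_succ j))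
        rw [hmax', hVs j]
        refine mem_satAt.mpr ⟨γ (yseq j) - δ' (yseq j), ?_⟩
        have hrepr2 : δ' + sgl (yseq j) (γ (yseq j) - δ' (yseq j)) = δ'' := by
          funext n
          show δ' n + sgl (yseq j) (γ (yseq j) - δ' (yseq j)) n = δ'' n
          by_cases hny : n = yseq j
          · subst hny
            rw [hδ'', Function.update_self, sgl_self]
            ring
          · rw [sgl_ne hny, add_zero, hδ'', Function.update_of_ne hny]
        rw [hrepr2]
        exact hmax ▸ hδ''mem
  -- escape lemma
  have hesc : ∀ (k : ℕ) (α β : ℕ → ZMod m), α ∈ Vseq k →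
      (∀ n, n ∉ Set.range yseq → β n = α n) → ∃ j, β ∈ Vseq j := by
    intro k α β hα hβ
    obtain ⟨M, hM⟩ := hIsOp k α hα
    set γ : ℕ → ZMod m := fun n => if n < M then α n else β n with hγdef
    have hγ : γ ∈ Vseq k := hM γ fun n hn => if_pos hn
    refine ⟨max k M, hfin M k γ β hγ ?_⟩
    intro n hn
    by_cases hnM : n < M
    · show β n = if n < M then α n else β n
      rw [if_pos hnM]
      by_cases hr : n ∈ Set.range yseq
      · obtain ⟨i, rfl⟩ := hr
        exact absurd rfl (hn i (lt_of_le_of_lt hysm.le_apply hnM))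
      · exact hβ n hr
    · show β n = if n < M then α n else β n
      rw [if_neg hnM]
  -- conclusion
  refine ⟨(⋃ k, Vseq k)ᶜ, Set.range yseq, ?_, ?_, ?_, ?_⟩
  · intro α hα
    by_contra hαP
    exact hα (Set.mem_iUnion.mpr ⟨0, hV0 ▸ hU₀sub hαP⟩)
  · exact Set.infinite_range_of_injective hysm.injective
  · rw [prob_compl_eq_one_sub hUmeas]
    exact tsub_pos_iff_lt.mpr hU1
  · intro α hα β hβ
    by_contra hβP
    have hβ0 : β ∈ Vseq 0 := hV0 ▸ hU₀sub hβP
    obtain ⟨j, hj⟩ := hesc 0 β α hβ0 fun n hn => (hβ n hn).symm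
    exact hα (Set.mem_iUnion.mpr ⟨j, hj⟩)
end

section
/- Let k ≥ 2 and Z ⊆ (0,1) be such that either Z is nonmeagre with the property of Baire, or Z is Lebesgue measurable with λ(Z) > 0. Then there exists H ⊆ ℝ with |H| = 2^{ℵ₀} such that kH ⊆ Z. -/
open Cardinal MeasureTheory Set Metric Filter Topology
open scoped ENNReal symmDiff
set_option maxHeartbeats 1000000

section st18aux

variable {δ : ℕ → ℝ}

private lemma st18_geom (hpos : ∀ n, 0 < δ n) (hdec : ∀ n, δ (n+1) ≤ δ n / 3) :
    ∀ n m : ℕ, δ (n + m) ≤ δ n * (1/3 : ℝ)^m := by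
  intro n m
  induction m with
  | zero => simp
  | succ m ih =>
    have h2 : δ (n + (m+1)) ≤ δ (n + m) / 3 := by
      have := hdec (n + m); rwa [show n + (m+1) = (n+m)+1 by ring]
    calc δ (n + (m+1)) ≤ δ (n+m) / 3 := h2
      _ ≤ (δ n * (1/3)^m) / 3 := by linarith
      _ = δ n * (1/3)^(m+1) := by ring

private lemma st18_summable (hpos : ∀ n, 0 < δ n) (hdec : ∀ n, δ (n+1) ≤ δ n / 3) :
    Summable δ := by
  refine Summable.of_nonneg_of_le (fun n => (hpos n).le) (fun n => ?_)
    ((summable_geometric_of_lt_one (by norm_num) (by norm_num : (1/3:ℝ) < 1)).mul_left (δ 0))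
  simpa using st18_geom hpos hdec 0 n

private lemma st18_tail (hpos : ∀ n, 0 < δ n) (hdec : ∀ n, δ (n+1) ≤ δ n / 3) (n : ℕ) :
    ∑' m, δ (m + (n+1)) ≤ δ n / 2 := by
  have hgs : Summable (fun m : ℕ => δ (n+1) * (1/3 : ℝ)^m) :=
    (summable_geometric_of_lt_one (by norm_num) (by norm_num : (1/3:ℝ) < 1)).mul_left _
  have h1 : ∑' m, δ (m + (n+1)) ≤ ∑' m : ℕ, δ (n+1) * (1/3 : ℝ)^m := by
    refine Summable.tsum_le_tsum (fun m => ?_) ((summable_nat_add_iff (n+1)).2 (st18_summable hpos hdec)) hgs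
    have := st18_geom hpos hdec (n+1) m
    rwa [add_comm (n+1) m] at this
  have h2 : ∑' m : ℕ, δ (n+1) * (1/3 : ℝ)^m = δ (n+1) * (3/2 : ℝ) := by
    rw [tsum_mul_left, tsum_geometric_of_lt_one (by norm_num) (by norm_num)]
    norm_num
  have := hdec n
  calc ∑' m, δ (m + (n+1)) ≤ δ (n+1) * (3/2) := by rw [← h2]; exact h1
    _ ≤ (δ n / 3) * (3/2) := by nlinarith [hpos (n+1)]
    _ = δ n / 2 := by ring

private lemma st18_tail' (hpos : ∀ n, 0 < δ n) (hdec : ∀ n, δ (n+1) ≤ δ n / 3) (n : ℕ) :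
    ∑' m, δ (m + n) ≤ 3/2 * δ n := by
  have hs : Summable (fun m : ℕ => δ (m + n)) :=
    (summable_nat_add_iff n).2 (st18_summable hpos hdec)
  rw [Summable.tsum_eq_zero_add hs]
  have e : ∑' (m : ℕ), δ (m + 1 + n) = ∑' m, δ (m + (n+1)) :=
    tsum_congr (fun m => by congr 1; omega)
  have ht := st18_tail hpos hdec n
  simp only [zero_add]
  rw [e]
  linarith

/-- Dependent-choice master lemma. -/
private lemma st18_master (Good : (n : ℕ) → (Fin n → ℝ) → Prop)
    (h0 : ∀ d : Fin 0 → ℝ, Good 0 d)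
    (hstep : ∀ n d, Good n d → ∃ x : ℝ, Good (n+1) (Fin.snoc d x)) :
    ∃ δ : ℕ → ℝ, ∀ n, Good n (fun i => δ i) := by
  classical
  let F : (n : ℕ) → {d : Fin n → ℝ // Good n d} := fun n =>
    Nat.rec ⟨fun i => i.elim0, h0 _⟩
      (fun n p => ⟨Fin.snoc p.1 (hstep n p.1 p.2).choose, (hstep n p.1 p.2).choose_spec⟩) n
  have hF : ∀ n, (F (n+1)).1 = Fin.snoc (F n).1 (hstep n (F n).1 (F n).2).choose := fun n => rfl
  refine ⟨fun n => (F (n+1)).1 (Fin.last n), fun n => ?_⟩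
  have key : ∀ n, (F n).1 = fun i : Fin n => (F (i.1+1)).1 (Fin.last i.1) := by
    intro n
    induction n with
    | zero => funext i; exact i.elim0
    | succ n ih =>
      funext i
      refine Fin.lastCases ?_ (fun j => ?_) i
      · rfl
      · rw [hF, Fin.snoc_castSucc]
        have := congrFun ih j
        simpa using this
  have := (F n).2
  rwa [key n] at this


private def st18dig (b : Bool) : ℕ := if b then 2 else 1

private lemma st18_assemble (k : ℕ) (hk : 2 ≤ k) (Z : Set ℝ) (c : ℝ)
    (hpos : ∀ n, 0 < δ n) (hdec : ∀ n, δ (n+1) ≤ δ n / 3)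
    (hmem : ∀ s : ℕ → ℕ, (∀ n, k ≤ s n ∧ s n ≤ 2*k) → c + ∑' n, (s n : ℝ) * δ n ∈ Z) :
    ∃ H : Set ℝ, #H = Cardinal.continuum ∧ kTimes k H ⊆ Z := by
  classical
  have hδs := st18_summable hpos hdec
  set w : (ℕ → Bool) → ℕ → ℝ := fun a n => (st18dig (a n) : ℝ) * δ n with hw
  have hws : ∀ a, Summable (w a) := by
    intro a
    refine Summable.of_nonneg_of_le (fun n => ?_) (fun n => ?_) (hδs.mul_left 2)
    · have : (0:ℝ) ≤ (st18dig (a n) : ℝ) := by positivity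
      exact mul_nonneg this (hpos n).le
    · have : (st18dig (a n) : ℝ) ≤ 2 := by cases a n <;> simp [st18dig]
      exact mul_le_mul_of_nonneg_right this (hpos n).le
  set g : (ℕ → Bool) → ℝ := fun a => c / k + ∑' n, w a n with hg
  have hginj : Function.Injective g := by
    intro a b hab
    by_contra hne
    have hx : ∃ n, a n ≠ b n := by
      by_contra h; push_neg at h; exact hne (funext h)
    set n := Nat.find hx with hn
    have hfind : a n ≠ b n := Nat.find_spec hx
    have hmin : ∀ m, m < n → a m = b m := fun m hm => by
      have := Nat.find_min hx hm; simpa using this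
    set e : ℕ → ℝ := fun i => ((st18dig (a i) : ℝ) - (st18dig (b i) : ℝ)) * δ i with he
    have hes : Summable e := by
      have hee : e = fun i => w a i - w b i := by funext i; simp only [he, hw]; ring
      rw [hee]; exact (hws a).sub (hws b)
    have hsum_e : ∑' i, e i = 0 := by
      have h1 : ∑' i, e i = (∑' i, w a i) - ∑' i, w b i := by
        have hee : e = fun i => w a i - w b i := by funext i; simp only [he, hw]; ring
        rw [hee]; exact Summable.tsum_sub (hws a) (hws b)
      have h2 : (∑' i, w a i) = ∑' i, w b i := by
        have : c / k + ∑' n, w a n = c / k + ∑' n, w b n := hab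
        linarith
      rw [h1, h2, sub_self]
    have hdecomp : (∑ i ∈ Finset.range (n+1), e i) + ∑' i, e (i + (n+1)) = ∑' i, e i :=
      Summable.sum_add_tsum_nat_add (n+1) hes
    have hhead : ∑ i ∈ Finset.range (n+1), e i = e n := by
      refine Finset.sum_eq_single_of_mem n (by simp) (fun i hi hin => ?_)
      have hi' : i < n := by simp only [Finset.mem_range] at hi; omega
      simp [he, hmin i hi']
    have habs_en : |e n| = δ n := by
      have h1 : |((st18dig (a n) : ℝ) - (st18dig (b n) : ℝ))| = 1 := by
        cases hA : a n <;> cases hB : b n <;> simp_all [st18dig] <;> norm_num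
      rw [he]
      simp only
      rw [abs_mul, h1, one_mul, abs_of_pos (hpos n)]
    have hnorms : Summable (fun i => ‖e (i + (n+1))‖) := by
      have := ((summable_nat_add_iff (n+1)).2 hes).abs
      simpa [Real.norm_eq_abs] using this
    have htail : |∑' i, e (i + (n+1))| ≤ δ n / 2 := by
      have h1 : ∀ i : ℕ, ‖e (i + (n+1))‖ ≤ δ (i + (n+1)) := by
        intro i
        rw [Real.norm_eq_abs, he]
        simp only
        rw [abs_mul, abs_of_pos (hpos _)]
        have h2 : |((st18dig (a (i+(n+1))) : ℝ) - (st18dig (b (i+(n+1))) : ℝ))| ≤ 1 := by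
          cases a (i+(n+1)) <;> cases b (i+(n+1)) <;> simp [st18dig] <;> norm_num
        have := hpos (i+(n+1))
        nlinarith
      calc |∑' i, e (i + (n+1))| ≤ ∑' i, ‖e (i + (n+1))‖ := by
            rw [← Real.norm_eq_abs]; exact norm_tsum_le_tsum_norm hnorms
        _ ≤ ∑' i, δ (i + (n+1)) :=
            Summable.tsum_le_tsum h1 hnorms ((summable_nat_add_iff (n+1)).2 hδs)
        _ ≤ δ n / 2 := st18_tail hpos hdec n
    have : δ n ≤ δ n / 2 := by
      have h0 : e n + ∑' i, e (i + (n+1)) = 0 := by rw [← hhead, hdecomp, hsum_e]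
      have : |e n| = |∑' i, e (i + (n+1))| := by
        have : e n = -(∑' i, e (i + (n+1))) := by linarith
        rw [this, abs_neg]
      rw [habs_en] at this
      linarith
    linarith [hpos n]
  refine ⟨Set.range g, ?_, ?_⟩
  · rw [Cardinal.mk_range_eq _ hginj, ← Cardinal.two_power_aleph0, ← Cardinal.mk_bool,
      ← Cardinal.mk_nat]
    exact (Cardinal.power_def Bool ℕ).symm
  · rintro y ⟨f, hf, rfl⟩
    choose a ha using hf
    set s : ℕ → ℕ := fun n => ∑ i : Fin k, st18dig (a i n) with hs
    have hsb : ∀ n, k ≤ s n ∧ s n ≤ 2*k := by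
      intro n
      constructor
      · calc k = ∑ _i : Fin k, 1 := by simp
          _ ≤ s n := Finset.sum_le_sum (fun i _ => by cases a i n <;> simp [st18dig])
      · calc s n ≤ ∑ _i : Fin k, 2 :=
              Finset.sum_le_sum (fun i _ => by cases a i n <;> simp [st18dig])
          _ = 2*k := by simp [mul_comm]
    have hk0 : (k : ℝ) ≠ 0 := by
      have : 0 < k := by omega
      positivity
    have key : ∑ i, f i = c + ∑' n, (s n : ℝ) * δ n := by
      have h1 : ∀ i : Fin k, f i = c/k + ∑' n, w (a i) n := fun i => (ha i).symm
      rw [Finset.sum_congr rfl (fun i _ => h1 i), Finset.sum_add_distrib, Finset.sum_const,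
        Finset.card_univ, Fintype.card_fin]
      have h3 : (k : ℕ) • ((c : ℝ) / k) = c := by
        rw [nsmul_eq_mul]; field_simp
      have h4 : ∑ i : Fin k, ∑' n, w (a i) n = ∑' n, ∑ i : Fin k, w (a i) n :=
        (Summable.tsum_finsetSum (fun i _ => hws (a i))).symm
      have h5 : ∀ n, ∑ i : Fin k, w (a i) n = (s n : ℝ) * δ n := by
        intro n
        simp only [hw, hs]
        push_cast
        rw [← Finset.sum_mul]
      rw [h3, h4, tsum_congr h5]
    rw [key]
    exact hmem s hsb


private lemma st18_vol_preimage (p m : ℝ) (hm : 0 < m) (A : Set ℝ) :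
    volume ((fun x : ℝ => p + m * x) ⁻¹' A) = ENNReal.ofReal m⁻¹ * volume A := by
  have h1 : (fun x : ℝ => p + m * x) ⁻¹' A = (m * ·) ⁻¹' ((p + ·) ⁻¹' A) := rfl
  rw [h1, Real.volume_preimage_mul_left hm.ne' _, measure_preimage_add volume p A,
    abs_of_pos (inv_pos.2 hm)]

private lemma st18_meas_step (k : ℕ) (hk : 2 ≤ k) (K D : Set ℝ) (hKm : MeasurableSet K)
    (hKD : volume (K \ D) = 0)
    (hDd : ∀ p ∈ K ∩ D,
      Tendsto (fun r => volume (K ∩ closedBall p r) / volume (closedBall p r)) (𝓝[>] 0) (𝓝 1))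
    (P : Finset ℝ) (hP : ∀ p ∈ P, p ∈ K ∩ D) {ρ₀ : ℝ} (hρ₀ : 0 < ρ₀) :
    ∃ x : ℝ, x ∈ Set.Ioc 0 ρ₀ ∧ ∀ p ∈ P, ∀ m : ℕ, k ≤ m → m ≤ 2*k → p + m * x ∈ K ∩ D := by
  classical
  rcases P.eq_empty_or_nonempty with rfl | hPne
  · exact ⟨ρ₀, ⟨hρ₀, le_rfl⟩, by simp⟩
  have hk0 : (0:ℝ) < k := by exact_mod_cast (by omega : 0 < k)
  set N : ℕ := P.card * (k+1) with hN
  set ε : ℝ≥0∞ := ENNReal.ofReal (1 / (8 * (N+1))) with hε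
  have hNpos : (0:ℝ) < 8 * ((N:ℝ)+1) := by positivity
  have hε0 : 0 < ε := by
    rw [hε]
    apply ENNReal.ofReal_pos.2
    positivity
  have hε1 : ε ≤ 1 := by
    rw [hε]
    apply ENNReal.ofReal_le_one.2
    rw [div_le_one hNpos]
    linarith
  -- density radii
  have hrad : ∀ p ∈ P, ∃ r > 0, ∀ t, 0 < t → t ≤ r →
      volume (closedBall p t \ K) ≤ ε * ENNReal.ofReal (2*t) := by
    intro p hp
    have hten := hDd p (hP p hp)
    have h1 : (1:ℝ≥0∞) - ε < 1 :=
      ENNReal.sub_lt_self ENNReal.one_ne_top one_ne_zero hε0.ne'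
    have hev : ∀ᶠ r in 𝓝[>] (0:ℝ),
        1 - ε < volume (K ∩ closedBall p r) / volume (closedBall p r) :=
      hten.eventually_const_lt h1
    obtain ⟨u, hu, hsub⟩ := mem_nhdsGT_iff_exists_Ioc_subset.1 hev
    refine ⟨u, hu, fun t ht0 htu => ?_⟩
    have hB : 1 - ε < volume (K ∩ closedBall p t) / volume (closedBall p t) :=
      hsub ⟨ht0, htu⟩
    have hBvol : volume (closedBall p t) = ENNReal.ofReal (2*t) := Real.volume_closedBall p t
    have hfin : volume (closedBall p t) ≠ ⊤ := by rw [hBvol]; exact ENNReal.ofReal_ne_top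
    have hne : volume (closedBall p t) ≠ 0 := by
      rw [hBvol]
      simp only [ne_eq, ENNReal.ofReal_eq_zero, not_le]
      linarith
    have h2 : (1 - ε) * volume (closedBall p t) < volume (K ∩ closedBall p t) := by
      rwa [ENNReal.lt_div_iff_mul_lt (Or.inl hne) (Or.inl hfin)] at hB
    have h3 : volume (closedBall p t \ K) =
        volume (closedBall p t) - volume (K ∩ closedBall p t) := by
      rw [← Set.diff_inter_self_eq_diff]
      exact measure_diff Set.inter_subset_right
        ((hKm.inter measurableSet_closedBall).nullMeasurableSet)
        (ne_top_of_le_ne_top hfin (measure_mono Set.inter_subset_right))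
    rw [h3, ← hBvol]
    have h4 : volume (closedBall p t) - volume (K ∩ closedBall p t) ≤
        volume (closedBall p t) - (1 - ε) * volume (closedBall p t) :=
      tsub_le_tsub_left h2.le _
    refine h4.trans ?_
    rw [hBvol]
    set v := ENNReal.ofReal (2*t)
    have hvne : v ≠ ⊤ := ENNReal.ofReal_ne_top
    rw [tsub_le_iff_right]
    calc v = 1 * v := (one_mul v).symm
      _ = ((1 - ε) + ε) * v := by rw [tsub_add_cancel_of_le hε1]
      _ = ε * v + (1-ε) * v := by ring
      _ ≤ ε * v + (1-ε) * v := le_rfl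
  choose! rad hrad0 hrad2 using hrad
  set ρ : ℝ := min ρ₀ ((P.inf' hPne rad) / (2*k)) with hρ
  have hinfpos : 0 < P.inf' hPne rad := by
    rw [Finset.lt_inf'_iff]
    exact fun p hp => hrad0 p hp
  have hρpos : 0 < ρ := lt_min hρ₀ (div_pos hinfpos (by positivity))
  have h2kρ : ∀ p ∈ P, 2*k*ρ ≤ rad p := by
    intro p hp
    have h1 : ρ ≤ (P.inf' hPne rad) / (2*k) := min_le_right _ _
    have h2 : P.inf' hPne rad ≤ rad p := Finset.inf'_le _ hp
    rw [le_div_iff₀ (by positivity)] at h1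
    nlinarith
  -- bad sets
  set A : ℝ → Set ℝ := fun p => closedBall p (2*k*ρ) \ (K ∩ D) with hA
  have hAvol : ∀ p ∈ P, volume (A p) ≤ ε * ENNReal.ofReal (2*(2*k*ρ)) := by
    intro p hp
    have hsub : A p ⊆ (closedBall p (2*k*ρ) \ K) ∪ (K \ D) := by
      rintro x ⟨hx1, hx2⟩
      by_cases hxK : x ∈ K
      · exact Or.inr ⟨hxK, fun hD => hx2 ⟨hxK, hD⟩⟩
      · exact Or.inl ⟨hx1, hxK⟩
    calc volume (A p) ≤ volume ((closedBall p (2*k*ρ) \ K) ∪ (K \ D)) := measure_mono hsub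
      _ ≤ volume (closedBall p (2*k*ρ) \ K) + volume (K \ D) := measure_union_le _ _
      _ = volume (closedBall p (2*k*ρ) \ K) := by rw [hKD, add_zero]
      _ ≤ ε * ENNReal.ofReal (2*(2*k*ρ)) := hrad2 p hp _ (by positivity) (h2kρ p hp)
  set Bad : ℝ → ℕ → Set ℝ := fun p m => (fun x : ℝ => p + (m:ℝ) * x) ⁻¹' (A p) with hBadDef
  set B1 : ℝ≥0∞ := ε * ENNReal.ofReal (4*ρ) with hB1
  have hBadvol : ∀ p ∈ P, ∀ m : ℕ, k ≤ m → volume (Bad p m) ≤ B1 := by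
    intro p hp m hm
    have hm0 : (0:ℝ) < m := by
      have : (k:ℝ) ≤ m := by exact_mod_cast hm
      linarith
    rw [hBadDef]
    simp only
    rw [st18_vol_preimage p m hm0 (A p)]
    calc ENNReal.ofReal (m:ℝ)⁻¹ * volume (A p)
        ≤ ENNReal.ofReal ((k:ℝ)⁻¹) * (ε * ENNReal.ofReal (2*(2*k*ρ))) := by
          apply mul_le_mul'
          · apply ENNReal.ofReal_le_ofReal
            apply inv_anti₀ hk0
            exact_mod_cast hm
          · exact hAvol p hp
      _ = ε * (ENNReal.ofReal ((k:ℝ)⁻¹) * ENNReal.ofReal (2*(2*k*ρ))) := by ring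
      _ = ε * ENNReal.ofReal ((k:ℝ)⁻¹ * (2*(2*k*ρ))) := by
          rw [← ENNReal.ofReal_mul (by positivity : (0:ℝ) ≤ (k:ℝ)⁻¹)]
      _ = B1 := by
          rw [hB1]
          congr 2
          field_simp
          ring
  set U : Set ℝ := ⋃ p ∈ P, ⋃ m ∈ Finset.Icc k (2*k), Bad p m with hU
  have hUvol : volume U < ENNReal.ofReal ρ := by
    have h1 : volume U ≤ ∑ p ∈ P, volume (⋃ m ∈ Finset.Icc k (2*k), Bad p m) :=
      measure_biUnion_finset_le _ _
    have h2 : ∀ p ∈ P, volume (⋃ m ∈ Finset.Icc k (2*k), Bad p m) ≤ (k+1) * B1 := by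
      intro p hp
      calc volume (⋃ m ∈ Finset.Icc k (2*k), Bad p m)
          ≤ ∑ m ∈ Finset.Icc k (2*k), volume (Bad p m) := measure_biUnion_finset_le _ _
        _ ≤ ∑ _m ∈ Finset.Icc k (2*k), B1 :=
            Finset.sum_le_sum (fun m hm => hBadvol p hp m (Finset.mem_Icc.1 hm).1)
        _ = (k+1) * B1 := by
            rw [Finset.sum_const, Nat.card_Icc, show 2*k+1-k = k+1 from by omega, nsmul_eq_mul]
            push_cast
            ring

    have h3 : volume U ≤ (N:ℝ≥0∞) * B1 := by
      calc volume U ≤ ∑ p ∈ P, volume (⋃ m ∈ Finset.Icc k (2*k), Bad p m) := h1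
        _ ≤ ∑ _p ∈ P, ((k:ℝ≥0∞)+1) * B1 := Finset.sum_le_sum h2
        _ = (P.card : ℝ≥0∞) * (((k:ℝ≥0∞)+1) * B1) := by rw [Finset.sum_const, nsmul_eq_mul]
        _ = (N:ℝ≥0∞) * B1 := by rw [hN]; push_cast; ring
    refine h3.trans_lt ?_
    have hN1 : (0:ℝ) ≤ N := by positivity
    have hof : ((N:ℝ≥0∞)) = ENNReal.ofReal (N:ℝ) := (ENNReal.ofReal_natCast N).symm
    have hdiv : (0:ℝ) ≤ 1 / (8*((N:ℝ)+1)) := by positivity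
    have hcalc : (N:ℝ≥0∞) * B1 = ENNReal.ofReal ((N:ℝ) * ((1 / (8 * ((N:ℝ)+1))) * (4*ρ))) := by
      rw [hB1, hε, ← ENNReal.ofReal_mul hdiv, hof, ← ENNReal.ofReal_mul hN1]
    rw [hcalc]
    apply (ENNReal.ofReal_lt_ofReal_iff hρpos).2
    have hkey : (N:ℝ) * ((1 / (8*((N:ℝ)+1))) * (4*ρ)) = (4*(N:ℝ)*ρ) * (8*((N:ℝ)+1))⁻¹ := by
      ring
    rw [hkey, ← div_eq_mul_inv, div_lt_iff₀ hNpos]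
    nlinarith
  have hx : ∃ x, x ∈ Set.Ioc 0 ρ ∧ x ∉ U := by
    by_contra h
    push_neg at h
    have hsub : Set.Ioc (0:ℝ) ρ ⊆ U := fun x hx => h x hx
    have hmono : volume (Set.Ioc (0:ℝ) ρ) ≤ volume U := measure_mono hsub
    rw [Real.volume_Ioc, sub_zero] at hmono
    exact absurd (hmono.trans_lt hUvol) (lt_irrefl _)
  obtain ⟨x, hxIoc, hxU⟩ := hx
  refine ⟨x, ⟨hxIoc.1, hxIoc.2.trans (min_le_left _ _)⟩, fun p hp m hm1 hm2 => ?_⟩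
  have hnotbad : x ∉ Bad p m := by
    intro hbad
    apply hxU
    rw [hU]
    refine Set.mem_biUnion hp ?_
    exact Set.mem_biUnion (Finset.mem_Icc.2 ⟨hm1, hm2⟩) hbad
  have hin : p + m * x ∈ closedBall p (2*k*ρ) := by
    rw [mem_closedBall, Real.dist_eq]
    have hm2' : (m:ℝ) ≤ 2*k := by exact_mod_cast hm2
    have hxnn : 0 ≤ x := hxIoc.1.le
    have habs : |(p + (m:ℝ)*x) - p| = (m:ℝ) * x := by
      rw [show (p + (m:ℝ)*x) - p = (m:ℝ)*x by ring]
      exact abs_of_nonneg (by positivity)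
    rw [habs]
    have hxρ := hxIoc.2
    have hm0' : (0:ℝ) ≤ m := by positivity
    nlinarith
  by_contra hnot
  exact hnotbad ⟨hin, hnot⟩


private lemma st18_meas_main (k : ℕ) (hk : 2 ≤ k) (Z : Set ℝ) (hZ : Z ⊆ Set.Ioo 0 1)
    (hnm : NullMeasurableSet Z volume) (hvol : 0 < volume Z) :
    ∃ c : ℝ, ∃ δ : ℕ → ℝ, (∀ n, 0 < δ n) ∧ (∀ n, δ (n+1) ≤ δ n / 3) ∧
      ∀ s : ℕ → ℕ, (∀ n, k ≤ s n ∧ s n ≤ 2*k) → c + ∑' n, (s n : ℝ) * δ n ∈ Z := by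
  classical
  obtain ⟨T, hTZ, hTm, hTeq⟩ := hnm.exists_measurable_subset_ae_eq
  have hTvol : 0 < volume T := by rw [measure_congr hTeq]; exact hvol
  have hTfin : volume T ≠ ⊤ := by
    have h1 : volume T ≤ volume (Set.Ioo (0:ℝ) 1) := measure_mono (hTZ.trans hZ)
    rw [Real.volume_Ioo] at h1
    exact ne_top_of_le_ne_top ENNReal.ofReal_ne_top h1
  obtain ⟨K, hKT, hKc, hKvol'⟩ := hTm.exists_isCompact_lt_add hTfin hTvol.ne'
  have hKvol : 0 < volume K := by
    rcases eq_or_lt_of_le (zero_le : (0:ℝ≥0∞) ≤ volume K) with he | h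
    · exfalso
      rw [← he, zero_add] at hKvol'
      exact absurd hKvol' (lt_irrefl _)
    · exact h
  have hKm : MeasurableSet K := hKc.isClosed.measurableSet
  set D : Set ℝ := {x | Tendsto (fun r => volume (K ∩ closedBall x r) / volume (closedBall x r))
    (𝓝[>] 0) (𝓝 1)} with hD
  have hKD : volume (K \ D) = 0 := by
    have hae := Besicovitch.ae_tendsto_measure_inter_div volume K
    rw [ae_iff, Measure.restrict_apply' hKm] at hae
    refine le_antisymm (le_trans (measure_mono ?_) hae.le) zero_le
    intro x hx
    exact ⟨hx.2, hx.1⟩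
  have hKDne : (K ∩ D).Nonempty := by
    rcases Set.eq_empty_or_nonempty (K ∩ D) with he | hne
    · exfalso
      have hsub : K ⊆ K \ D := fun x hx =>
        ⟨hx, fun hxD => Set.eq_empty_iff_forall_notMem.1 he x ⟨hx, hxD⟩⟩
      have hle : volume K ≤ volume (K \ D) := measure_mono hsub
      rw [hKD] at hle
      exact absurd (le_antisymm hle zero_le) hKvol.ne'
    · exact hne
  obtain ⟨c, hc⟩ := hKDne
  have hDd : ∀ p ∈ K ∩ D, Tendsto (fun r => volume (K ∩ closedBall p r) / volume (closedBall p r))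
      (𝓝[>] 0) (𝓝 1) := fun p hp => hp.2
  set Good : (n : ℕ) → (Fin n → ℝ) → Prop := fun n d =>
    (∀ i, 0 < d i) ∧ (∀ i j : Fin n, (i:ℕ)+1 = (j:ℕ) → d j ≤ d i / 3) ∧
    (∀ s : Fin n → ℕ, (∀ i, k ≤ s i ∧ s i ≤ 2*k) → c + ∑ i, (s i : ℝ) * d i ∈ K ∩ D)
    with hGoodDef
  have h0 : ∀ d : Fin 0 → ℝ, Good 0 d := by
    intro d
    refine ⟨fun i => i.elim0, fun i => i.elim0, fun s _ => ?_⟩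
    simpa using hc
  have hstep : ∀ n d, Good n d → ∃ x : ℝ, Good (n+1) (Fin.snoc d x) := by
    intro n d hd
    obtain ⟨hd1, hd2, hd3⟩ := hd
    set P : Finset ℝ :=
      Finset.image (fun s : Fin n → Fin (2*k+1) => c + ∑ i, ((s i : ℕ) : ℝ) * d i)
        (Finset.univ.filter (fun s : Fin n → Fin (2*k+1) => ∀ i, k ≤ (s i : ℕ))) with hP
    have hPK : ∀ p ∈ P, p ∈ K ∩ D := by
      intro p hp
      rw [hP] at hp
      simp only [Finset.mem_image, Finset.mem_filter, Finset.mem_univ, true_and] at hp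
      obtain ⟨s, hs, rfl⟩ := hp
      exact hd3 (fun i => (s i : ℕ)) (fun i => ⟨hs i, Nat.lt_succ_iff.1 (s i).isLt⟩)
    set ρ₀ : ℝ := if hn : n = 0 then 1 else min 1 (d ⟨n-1, by omega⟩ / 3) with hρ₀def
    have hρ₀ : 0 < ρ₀ := by
      rw [hρ₀def]
      split
      · norm_num
      · rename_i hn
        exact lt_min one_pos (by have := hd1 ⟨n-1, by omega⟩; linarith)
    obtain ⟨x, hxIoc, hxgood⟩ := st18_meas_step k hk K D hKm hKD hDd P hPK hρ₀
    refine ⟨x, fun i => ?_, fun i j hij => ?_, fun s hs => ?_⟩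
    · refine Fin.lastCases ?_ (fun j => ?_) i
      · rw [Fin.snoc_last]; exact hxIoc.1
      · rw [Fin.snoc_castSucc]; exact hd1 j
    · by_cases hj : (j:ℕ) < n
      · have hi : (i:ℕ) < n := by omega
        have hieq : i = Fin.castSucc ⟨(i:ℕ), hi⟩ := by ext; simp
        have hjeq : j = Fin.castSucc ⟨(j:ℕ), hj⟩ := by ext; simp
        rw [hieq, hjeq, Fin.snoc_castSucc, Fin.snoc_castSucc]
        exact hd2 _ _ (by simpa using hij)
      · have hjn : (j:ℕ) = n := by have := j.isLt; omega
        have hn0 : n ≠ 0 := by omega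
        have hi : (i:ℕ) < n := by omega
        have hieq : i = Fin.castSucc ⟨(i:ℕ), hi⟩ := by ext; simp
        have hjeq : j = Fin.last n := by ext; simpa using hjn
        rw [hieq, hjeq, Fin.snoc_castSucc, Fin.snoc_last]
        have hx2 : x ≤ ρ₀ := hxIoc.2
        rw [hρ₀def, dif_neg hn0] at hx2
        have hieq2 : (⟨(i:ℕ), hi⟩ : Fin n) = ⟨n-1, by omega⟩ := by ext; simp; omega
        rw [hieq2]
        exact hx2.trans (min_le_right _ _)
    · rw [Fin.sum_univ_castSucc]
      simp only [Fin.snoc_castSucc, Fin.snoc_last]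
      have hmem : (c + ∑ i : Fin n, (s i.castSucc : ℝ) * d i) ∈ P := by
        rw [hP]
        simp only [Finset.mem_image, Finset.mem_filter, Finset.mem_univ, true_and]
        refine ⟨fun i => ⟨s i.castSucc, by have := (hs i.castSucc).2; omega⟩,
          fun i => (hs i.castSucc).1, rfl⟩
      have hlast := hxgood _ hmem (s (Fin.last n)) (hs (Fin.last n)).1 (hs (Fin.last n)).2
      rw [← add_assoc]
      exact hlast
  obtain ⟨δ, hGoodAll⟩ := st18_master Good h0 hstep
  have hpos : ∀ n, 0 < δ n := fun n => (hGoodAll (n+1)).1 ⟨n, n.lt_succ_self⟩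
  have hdec : ∀ n, δ (n+1) ≤ δ n / 3 := by
    intro n
    exact (hGoodAll (n+2)).2.1 ⟨n, by omega⟩ ⟨n+1, by omega⟩ rfl
  refine ⟨c, δ, hpos, hdec, fun s hs => ?_⟩
  have hδs := st18_summable hpos hdec
  have hsum : Summable (fun n => (s n : ℝ) * δ n) := by
    refine Summable.of_nonneg_of_le (fun n => ?_) (fun n => ?_) (hδs.mul_left (2*(k:ℝ)))
    · exact mul_nonneg (by positivity) (hpos n).le
    · have h1 : (s n : ℝ) ≤ 2*(k:ℝ) := by exact_mod_cast (hs n).2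
      exact mul_le_mul_of_nonneg_right h1 (hpos n).le
  have hps : Tendsto (fun n => c + ∑ i ∈ Finset.range n, (s i : ℝ) * δ i) atTop
      (𝓝 (c + ∑' n, (s n : ℝ) * δ n)) :=
    tendsto_const_nhds.add hsum.hasSum.tendsto_sum_nat
  have hin : ∀ n, (c + ∑ i ∈ Finset.range n, (s i : ℝ) * δ i) ∈ K := by
    intro n
    have h1 := (hGoodAll n).2.2 (fun i => s i) (fun i => hs i)
    rw [Fin.sum_univ_eq_sum_range (fun i => (s i : ℝ) * δ i) n] at h1
    exact h1.1
  have hlim : (c + ∑' n, (s n : ℝ) * δ n) ∈ K :=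
    hKc.isClosed.mem_of_tendsto hps (Filter.Eventually.of_forall hin)
  exact hTZ (hKT hlim)


private lemma st18_unif_ball {P : Set ℝ} (hfin : P.Finite) {G : Set ℝ} (hG : IsOpen G) :
    P ⊆ G → ∃ r > 0, ∀ p ∈ P, Metric.ball p r ⊆ G := by
  refine Set.Finite.induction_on (motive := fun P _ => P ⊆ G → ∃ r > 0, ∀ p ∈ P, Metric.ball p r ⊆ G) P hfin (fun _ => ⟨1, one_pos, by simp⟩) ?_
  intro a s ha hs ih hPG
  · obtain ⟨r1, hr1, hball1⟩ := ih (fun x hx => hPG (Set.mem_insert_of_mem a hx))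
    obtain ⟨r2, hr2, hball2⟩ := Metric.isOpen_iff.1 hG a (hPG (Set.mem_insert a s))
    refine ⟨min r1 r2, lt_min hr1 hr2, ?_⟩
    rintro p (rfl | hp)
    · exact (Metric.ball_subset_ball (min_le_right _ _)).trans hball2
    · exact (Metric.ball_subset_ball (min_le_left _ _)).trans (hball1 p hp)

private lemma st18_nwd_union {s t : Set ℝ} (hs : IsClosed s)
    (hs' : interior s = ∅) (ht' : interior t = ∅) :
    interior (s ∪ t) = ∅ := by
  rw [interior_eq_empty_iff_dense_compl] at hs' ht' ⊢
  rw [Set.compl_union]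
  exact hs'.inter_of_isOpen_left ht' hs.isOpen_compl

private lemma st18_nwd_biUnion {ι : Type*} {f : ι → Set ℝ} :
    ∀ {t : Set ι}, t.Finite →
    (∀ i ∈ t, IsClosed (f i) ∧ interior (f i) = ∅) →
    IsClosed (⋃ i ∈ t, f i) ∧ interior (⋃ i ∈ t, f i) = ∅ := by
  intro t ht
  refine Set.Finite.induction_on (motive := fun t _ => (∀ i ∈ t, IsClosed (f i) ∧ interior (f i) = ∅) → IsClosed (⋃ i ∈ t, f i) ∧ interior (⋃ i ∈ t, f i) = ∅) t ht (fun _ => by simp) ?_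
  intro a s ha hs ih hprop
  rw [Set.biUnion_insert]
  obtain ⟨h1, h2⟩ := ih (fun i hi => hprop i (Set.mem_insert_of_mem a hi))
  obtain ⟨ha1, ha2⟩ := hprop a (Set.mem_insert a s)
  exact ⟨ha1.union h1, st18_nwd_union ha1 ha2 h2⟩

private lemma st18_cat_main (k : ℕ) (hk : 2 ≤ k) (Z : Set ℝ)
    (hnm : ¬ IsMeagre Z) (U M : Set ℝ) (hU : IsOpen U) (hM : IsMeagre M)
    (hZeq : Z = symmDiff U M) :
    ∃ c : ℝ, ∃ δ : ℕ → ℝ, (∀ n, 0 < δ n) ∧ (∀ n, δ (n+1) ≤ δ n / 3) ∧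
      ∀ s : ℕ → ℕ, (∀ n, k ≤ s n ∧ s n ≤ 2*k) → c + ∑' n, (s n : ℝ) * δ n ∈ Z := by
  classical
  have hk0 : (0:ℝ) < k := by exact_mod_cast (by omega : 0 < k)
  -- U is nonempty
  have hUne : U.Nonempty := by
    rcases U.eq_empty_or_nonempty with rfl | h
    · exfalso
      apply hnm
      refine hM.mono ?_
      rw [hZeq]
      intro x hx
      rcases Set.mem_symmDiff.1 hx with ⟨hx1, _⟩ | ⟨hx1, _⟩
      · exact absurd hx1 (Set.notMem_empty x)
      · exact hx1
    · exact h
  obtain ⟨u, hu⟩ := hUne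
  obtain ⟨r0, hr0, hballU⟩ := Metric.isOpen_iff.1 hU u hu
  -- meagre decomposition
  obtain ⟨S, hSnwd, hScnt, hMsub⟩ := isMeagre_iff_countable_union_isNowhereDense.1 hM
  obtain ⟨F, hF⟩ := (hScnt.insert ∅).exists_eq_range (Set.insert_nonempty _ _)
  set C : ℕ → Set ℝ := fun n => closure (F n) with hC
  have hCcl : ∀ n, IsClosed (C n) := fun n => isClosed_closure
  have hCint : ∀ n, interior (C n) = ∅ := by
    intro n
    have hFn : F n ∈ insert (∅ : Set ℝ) S := by rw [hF]; exact ⟨n, rfl⟩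
    rcases Set.mem_insert_iff.1 hFn with he | hS
    · rw [hC]; simp only; rw [he, closure_empty, interior_empty]
    · exact hSnwd _ hS
  have hMC : M ⊆ ⋃ n, C n := by
    intro x hx
    obtain ⟨t, htS, hxt⟩ := hMsub hx
    have ht' : t ∈ insert (∅ : Set ℝ) S := Set.mem_insert_of_mem _ htS
    rw [hF] at ht'
    obtain ⟨n, rfl⟩ := ht'
    exact Set.mem_iUnion.2 ⟨n, subset_closure hxt⟩
  set G : ℕ → Set ℝ := fun n => Metric.ball u r0 \ ⋃ m ∈ Finset.range n, C m with hG
  have hGopen : ∀ n, IsOpen (G n) :=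
    fun n => Metric.isOpen_ball.sdiff (isClosed_biUnion_finset (fun m _ => hCcl m))
  have hGsucc : ∀ n x, x ∈ G n → x ∉ C n → x ∈ G (n+1) := by
    intro n x hx hxc
    refine ⟨hx.1, fun hmem => ?_⟩
    simp only [Set.mem_iUnion, Finset.mem_range, exists_prop] at hmem
    obtain ⟨m, hm, hxm⟩ := hmem
    rcases Nat.lt_succ_iff_lt_or_eq.1 hm with hm' | rfl
    · exact hx.2 (Set.mem_iUnion.2 ⟨m, Set.mem_iUnion.2 ⟨Finset.mem_range.2 hm', hxm⟩⟩)
    · exact hxc hxm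
  -- the invariant
  set Good : (n : ℕ) → (Fin n → ℝ) → Prop := fun n d =>
    (∀ i, 0 < d i) ∧ (∀ i j : Fin n, (i:ℕ)+1 = (j:ℕ) → d j ≤ d i / 3) ∧
    (∀ s : Fin n → ℕ, (∀ i, k ≤ s i ∧ s i ≤ 2*k) → u + ∑ i, (s i : ℝ) * d i ∈ G n) ∧
    (∀ m : ℕ, ∀ hm : m < n, ∀ s : Fin m → ℕ, (∀ i, k ≤ s i ∧ s i ≤ 2*k) →
      Metric.ball (u + ∑ i : Fin m, (s i : ℝ) * d (Fin.castLE hm.le i)) (4*k*d ⟨m, hm⟩) ⊆ G m)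
    with hGoodDef
  have h0 : ∀ d : Fin 0 → ℝ, Good 0 d := by
    intro d
    refine ⟨fun i => i.elim0, fun i => i.elim0, fun s _ => ?_, fun m hm => absurd hm (by omega)⟩
    simp only [Finset.univ_eq_empty, Finset.sum_empty, add_zero]
    exact ⟨Metric.mem_ball_self hr0, by simp⟩
  have hstep : ∀ n d, Good n d → ∃ x : ℝ, Good (n+1) (Fin.snoc d x) := by
    intro n d hd
    obtain ⟨hd1, hd2, hd3, hd4⟩ := hd
    set Pts : Set ℝ := (fun s : Fin n → Fin (2*k+1) => u + ∑ i, ((s i : ℕ) : ℝ) * d i) ''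
      {s | ∀ i, k ≤ (s i : ℕ)} with hPts
    have hPfin : Pts.Finite := Set.toFinite _
    have hPtsG : Pts ⊆ G n := by
      rintro p ⟨s, hs, rfl⟩
      exact hd3 (fun i => (s i : ℕ)) (fun i => ⟨hs i, Nat.lt_succ_iff.1 (s i).isLt⟩)
    obtain ⟨r, hr, hballG⟩ := st18_unif_ball hPfin (hGopen n) hPtsG
    -- bad set
    set Bad : Set ℝ := ⋃ p ∈ Pts, ⋃ m ∈ Set.Icc k (2*k),
      (fun x : ℝ => p + (m:ℝ) * x) ⁻¹' (C n) with hBad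
    have hBadcl : IsClosed Bad ∧ interior Bad = ∅ := by
      refine st18_nwd_biUnion hPfin (fun p _ => ?_)
      refine st18_nwd_biUnion (Set.finite_Icc k (2*k)) (fun m hm => ?_)
      have hm0 : (0:ℝ) < m := by
        have : k ≤ m := (Set.mem_Icc.1 hm).1
        have : (k:ℝ) ≤ m := by exact_mod_cast this
        linarith
      have hcont : Continuous (fun x : ℝ => p + (m:ℝ) * x) :=
        continuous_const.add (continuous_const.mul continuous_id)
      constructor
      · exact (hCcl n).preimage hcont
      · set e : ℝ ≃ₜ ℝ := (Homeomorph.mulLeft₀ (m:ℝ) hm0.ne').trans (Homeomorph.addLeft p)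
          with he
        have hee : (fun x : ℝ => p + (m:ℝ) * x) ⁻¹' (C n) = e ⁻¹' (C n) := rfl
        rw [hee, ← Homeomorph.preimage_interior, hCint n, Set.preimage_empty]
    -- radius bound
    set ρ₁ : ℝ := min (if hn : n = 0 then 1 else d ⟨n-1, by omega⟩ / 3) (r/(8*k)) with hρ₁def
    have hρ₁ : 0 < ρ₁ := by
      rw [hρ₁def]
      refine lt_min ?_ (by positivity)
      split
      · norm_num
      · rename_i hn
        have := hd1 ⟨n-1, by omega⟩
        linarith
    have hdense : Dense Badᶜ := interior_eq_empty_iff_dense_compl.1 hBadcl.2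
    obtain ⟨x, hxIoo, hxBad⟩ := hdense.inter_open_nonempty (Set.Ioo 0 ρ₁) isOpen_Ioo
      (Set.nonempty_Ioo.2 hρ₁)
    have hx0 : 0 < x := hxIoo.1
    have hxρ : x < ρ₁ := hxIoo.2
    have hxr : 8*(k:ℝ)*x < r := by
      have h1 : x < r/(8*k) := hxρ.trans_le (min_le_right _ _)
      rw [lt_div_iff₀ (by positivity)] at h1
      nlinarith
    refine ⟨x, fun i => ?_, fun i j hij => ?_, fun s hs => ?_, fun m hm s hs => ?_⟩
    · refine Fin.lastCases ?_ (fun j => ?_) i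
      · rw [Fin.snoc_last]; exact hx0
      · rw [Fin.snoc_castSucc]; exact hd1 j
    · by_cases hj : (j:ℕ) < n
      · have hi : (i:ℕ) < n := by omega
        have hieq : i = Fin.castSucc ⟨(i:ℕ), hi⟩ := by ext; simp
        have hjeq : j = Fin.castSucc ⟨(j:ℕ), hj⟩ := by ext; simp
        rw [hieq, hjeq, Fin.snoc_castSucc, Fin.snoc_castSucc]
        exact hd2 _ _ (by simpa using hij)
      · have hjn : (j:ℕ) = n := by have := j.isLt; omega
        have hn0 : n ≠ 0 := by omega
        have hi : (i:ℕ) < n := by omega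
        have hieq : i = Fin.castSucc ⟨(i:ℕ), hi⟩ := by ext; simp
        have hjeq : j = Fin.last n := by ext; simpa using hjn
        rw [hieq, hjeq, Fin.snoc_castSucc, Fin.snoc_last]
        have hx2 : x ≤ (if hn : n = 0 then 1 else d ⟨n-1, by omega⟩ / 3) :=
          (hxρ.trans_le (min_le_left _ _)).le
        rw [dif_neg hn0] at hx2
        have hieq2 : (⟨(i:ℕ), hi⟩ : Fin n) = ⟨n-1, by omega⟩ := by ext; simp; omega
        rw [hieq2]
        exact hx2
    · -- membership at level n+1
      rw [Fin.sum_univ_castSucc]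
      simp only [Fin.snoc_castSucc, Fin.snoc_last]
      set p : ℝ := u + ∑ i : Fin n, (s i.castSucc : ℝ) * d i with hp
      have hpPts : p ∈ Pts := by
        rw [hPts]
        refine ⟨fun i => ⟨s i.castSucc, Nat.lt_succ_iff.2 (hs i.castSucc).2⟩,
          fun i => (hs i.castSucc).1, rfl⟩
      set m : ℕ := s (Fin.last n) with hm
      have hm1 : k ≤ m := (hs (Fin.last n)).1
      have hm2 : m ≤ 2*k := (hs (Fin.last n)).2
      have hmx : (m:ℝ) * x < r := by
        have h1 : (m:ℝ) ≤ 2*k := by exact_mod_cast hm2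
        nlinarith
      have hinG : p + (m:ℝ)*x ∈ G n := by
        apply hballG p hpPts
        rw [Metric.mem_ball, Real.dist_eq, show (p + (m:ℝ)*x) - p = (m:ℝ)*x by ring,
          abs_of_nonneg (by positivity)]
        exact hmx
      have hnotC : p + (m:ℝ)*x ∉ C n := by
        intro hcon
        apply hxBad
        rw [hBad]
        refine Set.mem_biUnion hpPts ?_
        exact Set.mem_biUnion (Set.mem_Icc.2 ⟨hm1, hm2⟩) hcon
      have hthis := hGsucc n _ hinG hnotC
      rw [← add_assoc]
      exact hthis
    · -- margin condition
      by_cases hmn : m < n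
      · -- old margins
        have hcast : ∀ i : Fin m, (Fin.snoc (α := fun _ => ℝ) d x) (Fin.castLE hm.le i) = d (Fin.castLE hmn.le i) := by
          intro i
          have : Fin.castLE hm.le i = Fin.castSucc (Fin.castLE hmn.le i) := by ext; simp
          rw [this, Fin.snoc_castSucc]
        have hval : (Fin.snoc (α := fun _ => ℝ) d x) ⟨m, hm⟩ = d ⟨m, hmn⟩ := by
          have : (⟨m, hm⟩ : Fin (n+1)) = Fin.castSucc ⟨m, hmn⟩ := by ext; simp
          rw [this, Fin.snoc_castSucc]
        rw [hval]
        have hsums : ∑ i : Fin m, (s i : ℝ) * (Fin.snoc (α := fun _ => ℝ) d x) (Fin.castLE hm.le i)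
            = ∑ i : Fin m, (s i : ℝ) * d (Fin.castLE hmn.le i) := by
          refine Finset.sum_congr rfl (fun i _ => ?_)
          rw [hcast i]
        rw [hsums]
        exact hd4 m hmn s hs
      · -- new margin at m = n
        have hmeq : n = m := by omega
        subst hmeq
        have hcast : ∀ i : Fin n, (Fin.snoc (α := fun _ => ℝ) d x) (Fin.castLE hm.le i) = d i := by
          intro i
          have h1 : Fin.castLE hm.le i = Fin.castSucc i := by ext; simp
          rw [h1, Fin.snoc_castSucc]
        have hval : (Fin.snoc (α := fun _ => ℝ) d x) ⟨n, hm⟩ = x := by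
          have h2 : (⟨n, hm⟩ : Fin (n+1)) = Fin.last n := by ext; simp
          rw [h2, Fin.snoc_last]
        rw [hval]
        have hsums : ∑ i : Fin n, (s i : ℝ) * (Fin.snoc (α := fun _ => ℝ) d x) (Fin.castLE hm.le i)
            = ∑ i : Fin n, (s i : ℝ) * d i := by
          refine Finset.sum_congr rfl (fun i _ => ?_)
          rw [hcast i]
        rw [hsums]
        have hpPts : (u + ∑ i : Fin n, (s i : ℝ) * d i) ∈ Pts := by
          rw [hPts]
          exact ⟨fun i => ⟨s i, Nat.lt_succ_iff.2 (hs i).2⟩, fun i => (hs i).1, rfl⟩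
        refine Set.Subset.trans (Metric.ball_subset_ball ?_) (hballG _ hpPts)
        nlinarith
  obtain ⟨δ, hGoodAll⟩ := st18_master Good h0 hstep
  have hpos : ∀ n, 0 < δ n := fun n => (hGoodAll (n+1)).1 ⟨n, n.lt_succ_self⟩
  have hdec : ∀ n, δ (n+1) ≤ δ n / 3 := fun n =>
    (hGoodAll (n+2)).2.1 ⟨n, by omega⟩ ⟨n+1, by omega⟩ rfl
  refine ⟨u, δ, hpos, hdec, fun s hs => ?_⟩
  have hδs := st18_summable hpos hdec
  have hsum : Summable (fun n => (s n : ℝ) * δ n) := by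
    refine Summable.of_nonneg_of_le (fun n => mul_nonneg (by positivity) (hpos n).le)
      (fun n => ?_) (hδs.mul_left (2*(k:ℝ)))
    have h1 : (s n : ℝ) ≤ 2*(k:ℝ) := by exact_mod_cast (hs n).2
    exact mul_le_mul_of_nonneg_right h1 (hpos n).le
  set L : ℝ := ∑' n, (s n : ℝ) * δ n with hL
  have hXG : ∀ n, u + L ∈ G n := by
    intro n
    have hmargin := (hGoodAll (n+1)).2.2.2 n (Nat.lt_succ_self n) (fun i => s i)
      (fun i => hs i)
    have hptval : ∑ i : Fin n, (s i : ℝ) * (fun j : Fin (n+1) => δ (j:ℕ)) (Fin.castLE (Nat.lt_succ_self n).le i)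
        = ∑ i ∈ Finset.range n, (s i : ℝ) * δ i := by
      rw [← Fin.sum_univ_eq_sum_range (fun i => (s i : ℝ) * δ i) n]
      refine Finset.sum_congr rfl (fun i _ => ?_)
      simp [Fin.coe_castLE]
    rw [hptval] at hmargin
    apply hmargin
    -- show u + L ∈ ball (u + partial) (4*k*δ n)
    rw [Metric.mem_ball, Real.dist_eq]
    have htail : L - ∑ i ∈ Finset.range n, (s i : ℝ) * δ i = ∑' m, (s (m+n) : ℝ) * δ (m+n) := by
      have := Summable.sum_add_tsum_nat_add (f := fun i => (s i : ℝ) * δ i) n hsum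
      rw [hL]
      linarith
    have htail_nonneg : (0:ℝ) ≤ ∑' m, (s (m+n) : ℝ) * δ (m+n) :=
      tsum_nonneg (fun m => mul_nonneg (by positivity) (hpos _).le)
    have htail_le : ∑' m, (s (m+n) : ℝ) * δ (m+n) ≤ 2*(k:ℝ) * (3/2 * δ n) := by
      have h1 : ∑' m, (s (m+n) : ℝ) * δ (m+n) ≤ ∑' m, 2*(k:ℝ) * δ (m+n) := by
        refine Summable.tsum_le_tsum (fun m => ?_) ((summable_nat_add_iff n).2 hsum)
          (((summable_nat_add_iff n).2 hδs).mul_left _)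
        have h2 : (s (m+n) : ℝ) ≤ 2*(k:ℝ) := by exact_mod_cast (hs (m+n)).2
        exact mul_le_mul_of_nonneg_right h2 (hpos _).le
      have h3 : ∑' m, 2*(k:ℝ) * δ (m+n) = 2*(k:ℝ) * ∑' m, δ (m+n) := tsum_mul_left
      have h4 := st18_tail' hpos hdec n
      calc ∑' m, (s (m+n) : ℝ) * δ (m+n) ≤ 2*(k:ℝ) * ∑' m, δ (m+n) := by rw [← h3]; exact h1
        _ ≤ 2*(k:ℝ) * (3/2 * δ n) := by nlinarith
    have heq : (u + L) - (u + ∑ i ∈ Finset.range n, (s i : ℝ) * δ i)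
        = ∑' m, (s (m+n) : ℝ) * δ (m+n) := by
      rw [← htail]; ring
    rw [heq, abs_of_nonneg htail_nonneg]
    have := hpos n
    nlinarith
  -- conclude membership in Z
  have hXU : u + L ∈ U := hballU (hXG 0).1
  have hXM : u + L ∉ M := by
    intro hmem
    obtain ⟨n, hn⟩ := Set.mem_iUnion.1 (hMC hmem)
    exact (hXG (n+1)).2 (Set.mem_iUnion.2 ⟨n, Set.mem_iUnion.2 ⟨Finset.self_mem_range_succ n, hn⟩⟩)
  rw [hZeq]
  exact Set.mem_symmDiff.2 (Or.inl ⟨hXU, hXM⟩)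


end st18aux

theorem stmt_18 (k : ℕ) (hk : 2 ≤ k) (Z : Set ℝ) (hZ : Z ⊆ Set.Ioo (0 : ℝ) 1)
    (hcase :
      (¬ IsMeagre Z ∧ ∃ (U M : Set ℝ), IsOpen U ∧ IsMeagre M ∧ Z = symmDiff U M) ∨
      (NullMeasurableSet Z volume ∧ 0 < volume Z)) :
    ∃ H : Set ℝ, #H = Cardinal.continuum ∧ kTimes k H ⊆ Z := by
  rcases hcase with ⟨hnm, U, M, hU, hM, hZeq⟩ | ⟨hnull, hvol⟩
  · obtain ⟨c, δ, hpos, hdec, hmem⟩ := st18_cat_main k hk Z hnm U M hU hM hZeq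
    exact st18_assemble k hk Z c hpos hdec hmem
  · obtain ⟨c, δ, hpos, hdec, hmem⟩ := st18_meas_main k hk Z hZ hnull hvol
    exact st18_assemble k hk Z c hpos hdec hmem
end
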